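/- arXiv:1401.0491 — 7 statements merged into one kernel-verified Lean document; each statement's English description precedes it below -/
import Mathlib

section
/- Let p be a prime and n ≥ 1. Let S be the subgroup of U(n) consisting of scalar matrices α·I with α ∈ ℂ, |α| = 1, and let π : U(n) → U(n)/S denote the quotient homomorphism. Let V be a subgroup of U(n)/S of order p (cyclic of order p). Then (1) there exists B ∈ U(n) with B^p = I whose image π(B) generates V, and (2) the preimage π⁻¹(V) of V in U(n) is isomorphic as a group to the direct product (circle group) × (ℤ/p). -/
namespace Stmt0Aux

variable {n : ℕ}

lemma scalar_mem (z : ℂ) (hz : ‖z‖ = 1) :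
    (z • (1 : Matrix (Fin n) (Fin n) ℂ)) ∈ Matrix.unitaryGroup (Fin n) ℂ := by
  rw [Matrix.mem_unitaryGroup_iff, star_smul, star_one, Matrix.smul_mul, Matrix.mul_smul,
    one_mul, smul_smul]
  have h : z * star z = 1 := by
    have h2 := Complex.mul_conj' z
    rw [hz] at h2
    simpa using h2
  rw [h, one_smul]

/-- scalar unitary matrix -/
def scalarU (z : ℂ) (hz : ‖z‖ = 1) : Matrix.unitaryGroup (Fin n) ℂ :=
  ⟨z • 1, scalar_mem z hz⟩

lemma scalarU_commute (z : ℂ) (hz : ‖z‖ = 1) (A : Matrix.unitaryGroup (Fin n) ℂ) :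
    Commute (scalarU z hz) A := by
  apply Subtype.ext
  show ((scalarU z hz * A : Matrix.unitaryGroup (Fin n) ℂ) : Matrix (Fin n) (Fin n) ℂ) = _
  simp [scalarU, Matrix.smul_mul, Matrix.mul_smul]

lemma scalarU_mul (z w : ℂ) (hz : ‖z‖ = 1) (hw : ‖w‖ = 1) :
    scalarU (n := n) (z * w) (by rw [norm_mul, hz, hw, mul_one]) = scalarU z hz * scalarU w hw := by
  apply Subtype.ext
  show (z * w) • (1 : Matrix (Fin n) (Fin n) ℂ) = (z • 1) * (w • 1)
  rw [Matrix.smul_mul, Matrix.mul_smul, one_mul, smul_smul]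

/-- the circle as scalar unitary matrices -/
noncomputable def circHom : Circle →* Matrix.unitaryGroup (Fin n) ℂ :=
  MonoidHom.mk' (fun z => scalarU (z : ℂ) (Circle.norm_coe z)) (by
    intro a b
    apply Subtype.ext
    show ((a * b : Circle) : ℂ) • (1 : Matrix (Fin n) (Fin n) ℂ) = ((a : ℂ) • 1) * ((b : ℂ) • 1)
    rw [Circle.coe_mul, Matrix.smul_mul, Matrix.mul_smul, one_mul, smul_smul])

lemma circHom_commute (z : Circle) (A : Matrix.unitaryGroup (Fin n) ℂ) :
    Commute (circHom z) A := scalarU_commute (z : ℂ) (Circle.norm_coe z) A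

/-- the map `(z, k) ↦ z • B ^ k` -/
noncomputable def psi (p : ℕ) [NeZero p] (B : Matrix.unitaryGroup (Fin n) ℂ) (hB : B ^ p = 1) :
    Circle × Multiplicative (ZMod p) →* Matrix.unitaryGroup (Fin n) ℂ :=
  MonoidHom.mk' (fun x => circHom x.1 * B ^ (Multiplicative.toAdd x.2).val) (by
    rintro ⟨z₁, k₁⟩ ⟨z₂, k₂⟩
    show circHom (z₁ * z₂) * B ^ (Multiplicative.toAdd (k₁ * k₂)).val
        = (circHom z₁ * B ^ (Multiplicative.toAdd k₁).val)
          * (circHom z₂ * B ^ (Multiplicative.toAdd k₂).val)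
    have h1 : (Multiplicative.toAdd (k₁ * k₂)).val
        = ((Multiplicative.toAdd k₁).val + (Multiplicative.toAdd k₂).val) % p :=
      ZMod.val_add _ _
    rw [h1, map_mul, ← pow_eq_pow_mod _ hB, pow_add]
    have hc : Commute (circHom z₂) (B ^ (Multiplicative.toAdd k₁).val) :=
      (circHom_commute z₂ B).pow_right _
    rw [mul_assoc, mul_assoc, ← mul_assoc (B ^ (Multiplicative.toAdd k₁).val), ← hc.eq,
      mul_assoc])

end Stmt0Aux

open Stmt0Aux in
/-- Let `p` be a prime and `n ≥ 1`. Let `S` be the subgroup of `U(n)`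
consisting of scalar matrices `α·I` with `|α| = 1`, and `π : U(n) → U(n)/S` the
quotient map. If `V ⊆ U(n)/S` has order `p`, then (1) a generator of `V` lifts to
an element `B` of `U(n)` of order dividing `p` (with `B^p = 1`), and (2) the
preimage of `V` in `U(n)` is isomorphic to `circle × ℤ/p`. -/
theorem stmt0 (p : ℕ) (hp : p.Prime) (n : ℕ) (hn : 1 ≤ n)
    (S : Subgroup (Matrix.unitaryGroup (Fin n) ℂ)) [S.Normal]
    (hS : ∀ A : Matrix.unitaryGroup (Fin n) ℂ,
      A ∈ S ↔ ∃ α : ℂ, ‖α‖ = 1 ∧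
        (A : Matrix (Fin n) (Fin n) ℂ) = α • (1 : Matrix (Fin n) (Fin n) ℂ))
    (V : Subgroup (Matrix.unitaryGroup (Fin n) ℂ ⧸ S))
    (hV : Nat.card V = p) :
    (∃ B : Matrix.unitaryGroup (Fin n) ℂ, B ^ p = 1 ∧
      Subgroup.zpowers ((QuotientGroup.mk' S) B) = V) ∧
    Nonempty ((V.comap (QuotientGroup.mk' S)) ≃* Circle × Multiplicative (ZMod p)) := by
  have : NeZero p := ⟨hp.ne_zero⟩
  have hVfin : Finite V := Nat.finite_of_card_ne_zero (by rw [hV]; exact hp.ne_zero)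
  -- find a generator g of V
  obtain ⟨g, hgV, hg1⟩ : ∃ g ∈ V, g ≠ 1 := by
    rcases Subgroup.bot_or_exists_ne_one V with h | h
    · exfalso; rw [h, Subgroup.card_bot] at hV; exact hp.one_lt.ne' hV.symm
    · exact h
  have hordg : orderOf g = p := by
    have h1 : orderOf (⟨g, hgV⟩ : V) ∣ p := hV ▸ orderOf_dvd_natCard _
    have h2 : orderOf g = orderOf (⟨g, hgV⟩ : V) := Subgroup.orderOf_coe (⟨g, hgV⟩ : V)
    rw [h2]
    rcases (Nat.Prime.eq_one_or_self_of_dvd hp _ h1) with h | h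
    · exfalso
      have := orderOf_eq_one_iff.mp h
      apply hg1
      exact congrArg Subtype.val this
    · exact h
  have hgzpV : Subgroup.zpowers g = V := by
    refine Subgroup.eq_of_le_of_card_ge (Subgroup.zpowers_le.2 hgV) ?_
    rw [hV, Nat.card_zpowers, hordg]
  -- lift g to A
  obtain ⟨A, hA⟩ := QuotientGroup.mk'_surjective S g
  have hApS : A ^ p ∈ S := by
    rw [← QuotientGroup.eq_one_iff (N := S)]
    show (QuotientGroup.mk' S) (A ^ p) = 1
    rw [map_pow, hA, ← hordg, pow_orderOf_eq_one]
  obtain ⟨α, hα, hAp⟩ := (hS _).1 hApS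
  obtain ⟨β, hβ⟩ := IsAlgClosed.exists_pow_nat_eq α hp.pos
  have hβa : ‖β‖ = 1 := by
    have h : ‖β‖ ^ p = 1 := by rw [← norm_pow, hβ, hα]
    rcases lt_trichotomy (‖β‖) 1 with h' | h' | h'
    · exfalso
      have := pow_lt_one₀ (norm_nonneg β) h' hp.ne_zero
      rw [h] at this; exact lt_irrefl _ this
    · exact h'
    · exfalso
      have := one_lt_pow₀ h' hp.ne_zero
      rw [h] at this; exact lt_irrefl _ this
  set s : Matrix.unitaryGroup (Fin n) ℂ := scalarU β hβa with hs
  have hsS : s ∈ S := (hS s).2 ⟨β, hβa, rfl⟩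
  have hsp : s ^ p = A ^ p := by
    apply Subtype.ext
    show ((s ^ p : Matrix.unitaryGroup (Fin n) ℂ) : Matrix (Fin n) (Fin n) ℂ) = _
    rw [SubmonoidClass.coe_pow]
    show (β • (1 : Matrix (Fin n) (Fin n) ℂ)) ^ p = _
    rw [smul_pow, one_pow, hβ, hAp]
  set B : Matrix.unitaryGroup (Fin n) ℂ := s⁻¹ * A with hB
  have hcomm : Commute s⁻¹ A := ((scalarU_commute β hβa A).inv_left)
  have hBp : B ^ p = 1 := by
    rw [hB, hcomm.mul_pow, inv_pow, hsp, inv_mul_cancel]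
  have hπB : (QuotientGroup.mk' S) B = g := by
    rw [hB, map_mul, map_inv, hA]
    have : (QuotientGroup.mk' S) s = 1 := (QuotientGroup.eq_one_iff s).2 hsS
    rw [this, inv_one, one_mul]
  have hzpow : Subgroup.zpowers ((QuotientGroup.mk' S) B) = V := by rw [hπB]; exact hgzpV
  refine ⟨⟨B, hBp, hzpow⟩, ?_⟩
  -- part 2
  have hordB : orderOf ((QuotientGroup.mk' S) B) = p := by
    rw [← Nat.card_zpowers, hzpow, hV]
  have hmem : ∀ x : Circle × Multiplicative (ZMod p),
      psi p B hBp x ∈ V.comap (QuotientGroup.mk' S) := by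
    rintro ⟨z, k⟩
    show (QuotientGroup.mk' S) (circHom z * B ^ (Multiplicative.toAdd k).val) ∈ V
    rw [map_mul, map_pow]
    have h1 : (QuotientGroup.mk' S) (circHom z) = 1 :=
      (QuotientGroup.eq_one_iff _).2 ((hS _).2 ⟨(z : ℂ), Circle.norm_coe z, rfl⟩)
    rw [h1, one_mul]
    rw [← hzpow]
    exact Subgroup.pow_mem _ (Subgroup.mem_zpowers _) _
  set ψ := (psi p B hBp).codRestrict (V.comap (QuotientGroup.mk' S)) hmem with hψ
  have hinj : Function.Injective ψ := by
    rw [injective_iff_map_eq_one]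
    rintro ⟨z, k⟩ h
    have h' : circHom z * B ^ (Multiplicative.toAdd k).val = 1 := by
      have := congrArg (Subtype.val) h
      exact this
    have hq : ((QuotientGroup.mk' S) B) ^ (Multiplicative.toAdd k).val = 1 := by
      have := congrArg (QuotientGroup.mk' S) h'
      rw [map_mul, map_pow, map_one] at this
      have h1 : (QuotientGroup.mk' S) (circHom z) = 1 :=
        (QuotientGroup.eq_one_iff _).2 ((hS _).2 ⟨(z : ℂ), Circle.norm_coe z, rfl⟩)
      rwa [h1, one_mul] at this
    have hdvd : p ∣ (Multiplicative.toAdd k).val := by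
      have := orderOf_dvd_of_pow_eq_one hq
      rwa [hordB] at this
    have hval0 : (Multiplicative.toAdd k).val = 0 :=
      Nat.eq_zero_of_dvd_of_lt hdvd (ZMod.val_lt _)
    have hk : k = 1 := by
      have : Multiplicative.toAdd k = 0 := (ZMod.val_eq_zero _).1 hval0
      exact this
    rw [hval0, pow_zero, mul_one] at h'
    have hz : z = 1 := by
      apply Circle.coe_injective
      have hm : (z : ℂ) • (1 : Matrix (Fin n) (Fin n) ℂ) = 1 := congrArg Subtype.val h'
      have := congrArg (fun M : Matrix (Fin n) (Fin n) ℂ => M ⟨0, hn⟩ ⟨0, hn⟩) hm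
      simpa [Matrix.one_apply] using this
    rw [hz, hk]
    rfl
  have hsurj : Function.Surjective ψ := by
    rintro ⟨x, hx⟩
    have hx' : (QuotientGroup.mk' S) x ∈ Subgroup.zpowers ((QuotientGroup.mk' S) B) := by
      rw [hzpow]; exact hx
    obtain ⟨m, hm⟩ := Subgroup.mem_zpowers_iff.1 hx'
    set k : ZMod p := (m : ZMod p) with hk
    have hmk : ((QuotientGroup.mk' S) B) ^ (k.val : ℤ) = (QuotientGroup.mk' S) x := by
      rw [← hm]
      rw [zpow_eq_zpow_iff_modEq, hordB]
      have : ((k.val : ℤ) : ZMod p) = ((m : ℤ) : ZMod p) := by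
        push_cast
        rw [ZMod.natCast_val, ZMod.cast_id]
      exact (ZMod.intCast_eq_intCast_iff _ _ _).1 this
    have hmem' : x * (B ^ k.val)⁻¹ ∈ S := by
      rw [← QuotientGroup.eq_one_iff (N := S)]
      show (QuotientGroup.mk' S) (x * (B ^ k.val)⁻¹) = 1
      rw [map_mul, map_inv, map_pow, ← zpow_natCast ((QuotientGroup.mk' S) B), hmk,
        mul_inv_cancel]
    obtain ⟨γ, hγ, hγeq⟩ := (hS _).1 hmem'
    have hγnorm : γ ∈ Metric.sphere (0 : ℂ) 1 := by
      rw [mem_sphere_zero_iff_norm]; exact hγ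
    refine ⟨⟨(⟨γ, hγnorm⟩ : Circle), Multiplicative.ofAdd k⟩, ?_⟩
    apply Subtype.ext
    show circHom _ * B ^ (Multiplicative.toAdd (Multiplicative.ofAdd k)).val = x
    have hcirc : circHom (⟨γ, hγnorm⟩ : Circle) = x * (B ^ k.val)⁻¹ := by
      apply Subtype.ext
      show γ • (1 : Matrix (Fin n) (Fin n) ℂ) = _
      exact hγeq.symm
    rw [toAdd_ofAdd, hcirc, inv_mul_cancel_right]
  exact ⟨(MulEquiv.ofBijective ψ ⟨hinj, hsurj⟩).symm⟩
end

section
/- Let p be a prime and let H be a topological group with a closed normal subgroup T of finite index such that T is topologically isomorphic to a finite product of copies of the circle group (a torus, possibly trivial) and the quotient H/T is a finite group of p-power order. Assume H is nontrivial and H is not elementary abelian, i.e., it is not the case that H is commutative with g^p = 1 for every g ∈ H. Then there exists an element g of H such that: g lies in the center of H, g has order exactly p, and g belongs to the normal subgroup of H generated by the set of all p-th powers {x^p : x ∈ H} together with all commutators [x,y] = x y x⁻¹ y⁻¹ (x, y ∈ H). -/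
open scoped Real

private lemma circle_exp_pow (x : ℝ) (n : ℕ) :
    Circle.exp x ^ n = Circle.exp (n * x) := by
  induction n with
  | zero => simp [Circle.exp_zero]
  | succ n ih =>
      rw [pow_succ, ih, ← Circle.exp_add]
      congr 1
      push_cast
      ring

private lemma keyA {p : ℕ} (hp : p.Prime) {H : Type*} [Group H]
    (T : Subgroup H) [T.Normal]
    (hQ : IsPGroup p (H ⧸ T))
    (N : Subgroup H) [N.Normal] (hNfin : Finite N)
    (hTN : ∀ t ∈ T, ∀ n ∈ N, t * n = n * t)
    (hpN : p ∣ Nat.card N) :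
    ∃ g : H, g ∈ N ∧ g ∈ Subgroup.center H ∧ orderOf g = p := by
  haveI : Fact p.Prime := ⟨hp⟩
  have hker : T ≤ (MulAut.conjNormal (G := H) (H := N)).ker := by
    intro t ht
    rw [MonoidHom.mem_ker]
    ext n
    show ((MulAut.conjNormal t n : N) : H) = ((n : N) : H)
    rw [MulAut.conjNormal_apply, hTN t ht n n.2, mul_inv_cancel_right]
  let ρ : H ⧸ T →* MulAut N := QuotientGroup.lift T MulAut.conjNormal hker
  letI := MulDistribMulAction.compHom N ρ
  have hsmul : ∀ (h : H) (n : N), ((h : H ⧸ T) • n : N) = MulAut.conjNormal h n := by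
    intro h n
    show ρ ((h : H ⧸ T)) • n = _
    have : ρ ((h : H ⧸ T)) = MulAut.conjNormal h :=
      QuotientGroup.lift_mk' (N := T) (φ := MulAut.conjNormal) hker h
    rw [this, MulAut.smul_def]
  let F : Subgroup N := FixedPoints.subgroup (H ⧸ T) N
  have hcardF : Nat.card F = Nat.card (MulAction.fixedPoints (H ⧸ T) N) := rfl
  have hmod := hQ.card_modEq_card_fixedPoints (α := N)
  have hdvdF : p ∣ Nat.card F := by
    rw [hcardF]
    exact (Nat.modEq_zero_iff_dvd).mp
      ((hmod.symm.trans (Nat.modEq_zero_iff_dvd.mpr hpN)))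
  obtain ⟨x, hx⟩ := exists_prime_orderOf_dvd_card' (G := F) p hdvdF
  have hfix : ∀ h : H, MulAut.conjNormal h (x : N) = (x : N) := by
    intro h
    have := x.2 ((h : H ⧸ T))
    rwa [hsmul h (x : N)] at this
  refine ⟨((x : N) : H), (x : N).2, Subgroup.mem_center_iff.mpr fun h => ?_, ?_⟩
  · have h1 : h * ((x : N) : H) * h⁻¹ = ((x : N) : H) := by
      have := congrArg (fun n : N => (n : H)) (hfix h)
      simpa [MulAut.conjNormal_apply] using this
    exact mul_inv_eq_iff_eq_mul.mp h1
  · have hinj : Function.Injective (N.subtype.comp F.subtype) :=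
      N.subtype_injective.comp F.subtype_injective
    have := orderOf_injective (N.subtype.comp F.subtype) hinj x
    rw [← hx]
    exact this

/-- Let `H` be a `p`-toral group (a topological group with a closed
normal subgroup `T` of finite index which is a torus, with `H/T` a finite
`p`-group). If `H` is nontrivial and not elementary abelian, then there is a
central element of `H` of order exactly `p` lying in the normal subgroup
generated by `p`-th powers and commutators. -/
theorem stmt3 (p : ℕ) (hp : p.Prime)
    (H : Type*) [Group H] [TopologicalSpace H] [IsTopologicalGroup H]
    (T : Subgroup H) [T.Normal] (hTclosed : IsClosed (T : Set H))
    (r : ℕ) (eT : T ≃* (Fin r → Circle))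
    (heT : Continuous eT) (heTsymm : Continuous eT.symm)
    (k : ℕ) (hHT : Nat.card (H ⧸ T) = p ^ k)
    (hnontriv : Nontrivial H)
    (hnotEA : ¬ ((∀ a b : H, a * b = b * a) ∧ ∀ g : H, g ^ p = 1)) :
    ∃ g : H, g ∈ Subgroup.center H ∧ orderOf g = p ∧
      g ∈ Subgroup.normalClosure
        {x : H | (∃ y : H, x = y ^ p) ∨ ∃ a b : H, x = a * b * a⁻¹ * b⁻¹} := by
  haveI : Fact p.Prime := ⟨hp⟩
  have hQ : IsPGroup p (H ⧸ T) := IsPGroup.of_card hHT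
  set S : Set H := {x : H | (∃ y : H, x = y ^ p) ∨ ∃ a b : H, x = a * b * a⁻¹ * b⁻¹} with hS
  rcases Nat.eq_zero_or_pos r with hr | hr
  · -- r = 0 : T is trivial, H is a finite p-group
    subst hr
    haveI : Subsingleton (Fin 0 → Circle) := by infer_instance
    haveI : Subsingleton T := eT.toEquiv.subsingleton
    have hT1 : ∀ x ∈ T, x = (1 : H) := by
      intro x hx
      have : (⟨x, hx⟩ : T) = (1 : T) := Subsingleton.elim _ _
      exact congrArg (fun t : T => (t : H)) this
    have hTbot : T = ⊥ := by
      ext x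
      simp only [Subgroup.mem_bot]
      exact ⟨fun hx => hT1 x hx, fun hx => hx ▸ T.one_mem⟩
    have hinj : Function.Injective (QuotientGroup.mk' T) := by
      rw [← MonoidHom.ker_eq_bot_iff, QuotientGroup.ker_mk']
      exact hTbot
    haveI : Finite (H ⧸ T) := Nat.finite_of_card_ne_zero (by
      rw [hHT]; exact pow_ne_zero k hp.pos.ne')
    haveI : Finite H := Finite.of_injective _ hinj
    have hPH : IsPGroup p H := hQ.of_injective (QuotientGroup.mk' T) hinj
    set K : Subgroup H := Subgroup.normalClosure S with hK
    haveI : K.Normal := Subgroup.normalClosure_normal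
    have hKne : ∃ x ∈ K, x ≠ (1 : H) := by
      by_contra hcon
      push_neg at hcon
      refine hnotEA ⟨fun a b => ?_, fun g => ?_⟩
      · have hm : a * b * a⁻¹ * b⁻¹ ∈ K :=
          Subgroup.subset_normalClosure (Or.inr ⟨a, b, rfl⟩)
        have h1 : a * b * a⁻¹ * b⁻¹ = 1 := hcon _ hm
        have h2 : a * b * a⁻¹ = b := by
          have := mul_inv_eq_one.mp h1
          exact this
        calc a * b = a * b * a⁻¹ * a := by rw [mul_assoc, inv_mul_cancel, mul_one]
          _ = b * a := by rw [h2]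
      · exact hcon _ (Subgroup.subset_normalClosure (Or.inl ⟨g, rfl⟩))
    obtain ⟨x, hxK, hx1⟩ := hKne
    have hPK : IsPGroup p K := hPH.to_subgroup K
    obtain ⟨m, hm⟩ := IsPGroup.iff_orderOf.mp hPK ⟨x, hxK⟩
    have hm0 : m ≠ 0 := by
      intro h0
      rw [h0, pow_zero, orderOf_eq_one_iff] at hm
      exact hx1 (congrArg (fun t : K => (t : H)) hm)
    have hdvd : p ∣ Nat.card K := by
      have := orderOf_dvd_natCard (⟨x, hxK⟩ : K)
      rw [hm] at this
      exact (dvd_pow_self p hm0).trans this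
    obtain ⟨g, hgK, hgZ, hgord⟩ := keyA hp T hQ K inferInstance
      (fun t ht n _ => by rw [hT1 t ht, one_mul, mul_one]) hdvd
    exact ⟨g, hgZ, hgord, hgK⟩
  · -- r > 0 : use the p-torsion of the torus
    have hcommT : ∀ a b : T, a * b = b * a := fun a b =>
      eT.injective (by rw [map_mul, map_mul, mul_comm])
    have hcommH : ∀ a ∈ T, ∀ b ∈ T, a * b = b * a := by
      intro a ha b hb
      have := congrArg (fun t : T => (t : H)) (hcommT ⟨a, ha⟩ ⟨b, hb⟩)
      simpa using this
    set N : Subgroup H :=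
      { carrier := {x : H | x ∈ T ∧ x ^ p = 1}
        one_mem' := ⟨T.one_mem, one_pow p⟩
        mul_mem' := by
          rintro a b ⟨haT, hap⟩ ⟨hbT, hbp⟩
          refine ⟨T.mul_mem haT hbT, ?_⟩
          have hc : Commute a b := hcommH a haT b hbT
          rw [hc.mul_pow, hap, hbp, one_mul]
        inv_mem' := by
          rintro a ⟨haT, hap⟩
          exact ⟨T.inv_mem haT, by rw [inv_pow, hap, inv_one]⟩ } with hN
    have hmemN : ∀ x : H, x ∈ N ↔ x ∈ T ∧ x ^ p = 1 := fun x => Iff.rfl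
    haveI : N.Normal := by
      constructor
      intro n hn g
      obtain ⟨hnT, hnp⟩ := hn
      refine ⟨‹T.Normal›.conj_mem n hnT g, ?_⟩
      rw [conj_pow, hnp, mul_one, mul_inv_cancel]
    -- Finiteness of N
    have hfinC : {z : ℂ | z ^ p = 1}.Finite := by
      refine Set.Finite.subset (Polynomial.nthRoots p (1 : ℂ)).toFinset.finite_toSet ?_
      intro z hz
      simp only [Finset.coe_sort_coe, Finset.mem_coe, Multiset.mem_toFinset]
      rw [Polynomial.mem_nthRoots hp.pos]
      exact hz
    have hfinCi : {z : Circle | z ^ p = 1}.Finite := by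
      have : {z : Circle | z ^ p = 1} ⊆ (fun z : Circle => (z : ℂ)) ⁻¹' {z : ℂ | z ^ p = 1} := by
        intro z hz
        simp only [Set.mem_preimage, Set.mem_setOf_eq]
        have hzp : z ^ p = 1 := hz
        have h1 : ((z ^ p : Circle) : ℂ) = 1 := by rw [hzp]; exact Circle.coe_one
        exact (map_pow Circle.coeHom z p).symm.trans h1
      exact Set.Finite.preimage (Set.injOn_of_injective Circle.coe_injective) hfinC |>.subset this
    have hfinPi : {f : Fin r → Circle | f ^ p = 1}.Finite := by
      refine Set.Finite.subset (Set.Finite.pi (fun _ : Fin r => hfinCi)) ?_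
      intro f hf i _
      have := congrFun hf i
      simpa using this
    haveI hNfin : Finite N := by
      haveI := hfinPi.to_subtype
      refine Finite.of_injective
        (fun n : N => (⟨eT ⟨n.1, n.2.1⟩, ?_⟩ : {f : Fin r → Circle // f ∈ {f | f ^ p = 1}}))
        ?_
      · show (eT ⟨n.1, n.2.1⟩) ^ p = 1
        rw [← map_pow, ← map_one eT]
        congr 1
        ext
        simpa using n.2.2
      · intro a b hab
        have := eT.injective (Subtype.ext_iff.mp hab)
        exact Subtype.ext (congrArg (fun t : T => (t : H)) this)
    -- a nontrivial element of N
    have hp0 : (0 : ℝ) < p := by exact_mod_cast hp.pos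
    set e : Circle := Circle.exp (2 * π / p) with he
    have hep : e ^ p = 1 := by
      rw [he, circle_exp_pow, mul_div_cancel₀ _ hp0.ne', Circle.exp_two_pi]
    have hene : e ≠ 1 := by
      intro h1
      obtain ⟨n, hn⟩ := Circle.exp_eq_one.mp h1
      rw [div_eq_iff hp0.ne'] at hn
      have h2π : (2 * π) ≠ 0 := by positivity
      have h3 : (n : ℝ) * p * (2 * π) = 1 * (2 * π) := by linear_combination -hn
      have h4 : (n : ℝ) * p = 1 := mul_right_cancel₀ h2π h3
      have h5 : (n * (p : ℤ) : ℤ) = 1 := by exact_mod_cast h4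
      have h6 : (p : ℤ) ∣ 1 := ⟨n, by linarith⟩
      have h7 : (p : ℤ) ≤ 1 := Int.le_of_dvd one_pos h6
      have h8 : (2 : ℤ) ≤ (p : ℤ) := by exact_mod_cast hp.two_le
      linarith
    set f0 : Fin r → Circle := fun _ => e with hf0
    have hf0p : f0 ^ p = 1 := by
      funext i
      simpa using hep
    set x0 : H := ((eT.symm f0 : T) : H) with hx0
    have hx0T : x0 ∈ T := (eT.symm f0).2
    have hx0p : x0 ^ p = 1 := by
      have : (eT.symm f0) ^ p = 1 := by
        rw [← map_pow, hf0p, map_one]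
      calc x0 ^ p = (((eT.symm f0) ^ p : T) : H) := by simp [hx0]
        _ = 1 := by rw [this]; rfl
    have hx0ne : x0 ≠ 1 := by
      intro h1
      have h2 : (eT.symm f0 : T) = 1 := by
        exact Subtype.ext (by simpa [hx0] using h1)
      have h3 : f0 = 1 := by
        have := congrArg eT h2
        rwa [MulEquiv.apply_symm_apply, map_one] at this
      have h4 : e = 1 := by
        have := congrFun h3 ⟨0, hr⟩
        simpa [hf0] using this
      exact hene h4
    have hx0N : x0 ∈ N := ⟨hx0T, hx0p⟩
    have hdvd : p ∣ Nat.card N := by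
      have hord : orderOf (⟨x0, hx0N⟩ : N) = p := by
        apply orderOf_eq_prime
        · exact Subtype.ext (by simpa using hx0p)
        · intro h1
          exact hx0ne (congrArg (fun t : N => (t : H)) h1)
      rw [← hord]
      exact orderOf_dvd_natCard _
    obtain ⟨g, hgN, hgZ, hgord⟩ := keyA hp T hQ N hNfin
      (fun t ht n hn => hcommH t ht n hn.1) hdvd
    refine ⟨g, hgZ, hgord, ?_⟩
    -- g has a p-th root in T
    obtain ⟨hgT, -⟩ := hgN
    set w : Fin r → Circle := fun i =>
      Circle.exp (Complex.arg ((eT ⟨g, hgT⟩ : Fin r → Circle) i) / p) with hw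
    have hwp : w ^ p = eT ⟨g, hgT⟩ := by
      funext i
      show w i ^ p = _
      rw [hw]
      simp only []
      rw [circle_exp_pow, mul_div_cancel₀ _ hp0.ne', Circle.exp_arg]
    have hyp : ((eT.symm w : T) : H) ^ p = g := by
      have : (eT.symm w) ^ p = ⟨g, hgT⟩ := by
        rw [← map_pow, hwp, MulEquiv.symm_apply_apply]
      calc ((eT.symm w : T) : H) ^ p = (((eT.symm w) ^ p : T) : H) := by simp
        _ = g := by rw [this]
    exact Subgroup.subset_normalClosure (Or.inl ⟨((eT.symm w : T) : H), hyp.symm⟩)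
end

section
/- Let H be a group acting on a set X, and let r be an equivalence relation on X preserved by H (if x ∼ y then h•x ∼ h•y for every h ∈ H). Let J be a normal subgroup of H. Define the relation r_J on X by: x ∼_J y if and only if there exists j ∈ J with x ∼ j•y. Then: (1) r_J is an equivalence relation on X; (2) r_J is preserved by H (if x ∼_J y then h•x ∼_J h•y for every h ∈ H); (3) x ∼_J j•x for every x ∈ X and j ∈ J; and (4) r_J is the smallest equivalence relation on X containing r and satisfying property (3), i.e., any equivalence relation r' with (x ∼ y → x ∼' y) and (x ∼' j•x for all x ∈ X, j ∈ J) contains r_J. -/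
/-- Let `H` act on `X`, let `r` be an `H`-invariant equivalence
relation on `X`, and let `J` be a normal subgroup of `H`. Define `x ∼_J y` iff
`∃ j ∈ J, r x (j • y)`. Then `∼_J` is an equivalence relation, it is
`H`-invariant, it relates `x` to `j • x` for every `j ∈ J`, and it is the
smallest equivalence relation containing `r` with that property. -/
theorem stmt6 (H : Type*) [Group H] (X : Type*) [MulAction H X]
    (r : X → X → Prop) (hr : Equivalence r)
    (hrH : ∀ (h : H) (x y : X), r x y → r (h • x) (h • y))
    (J : Subgroup H) [J.Normal] :
    let rJ : X → X → Prop := fun x y => ∃ j ∈ J, r x (j • y)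
    Equivalence rJ ∧
    (∀ (h : H) (x y : X), rJ x y → rJ (h • x) (h • y)) ∧
    (∀ (x : X), ∀ j ∈ J, rJ x (j • x)) ∧
    (∀ r' : X → X → Prop, Equivalence r' →
      (∀ x y : X, r x y → r' x y) →
      (∀ (x : X), ∀ j ∈ J, r' x (j • x)) →
      ∀ x y : X, rJ x y → r' x y) := by
  intro rJ
  refine ⟨⟨fun x => ⟨1, J.one_mem, by simpa using hr.refl x⟩, ?_, ?_⟩, ?_, ?_, ?_⟩
  · rintro x y ⟨j, hj, hxy⟩
    refine ⟨j⁻¹, J.inv_mem hj, ?_⟩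
    have := hrH j⁻¹ _ _ (hr.symm hxy)
    simpa using this
  · rintro x y z ⟨j, hj, hxy⟩ ⟨k, hk, hyz⟩
    refine ⟨j * k, J.mul_mem hj hk, ?_⟩
    have := hrH j _ _ hyz
    rw [smul_smul] at this
    exact hr.trans hxy (by simpa [mul_smul] using this)
  · rintro h x y ⟨j, hj, hxy⟩
    refine ⟨h * j * h⁻¹, Subgroup.Normal.conj_mem ‹J.Normal› j hj h, ?_⟩
    have := hrH h _ _ hxy
    simpa [mul_smul] using this
  · intro x j hj
    exact ⟨j⁻¹, J.inv_mem hj, by simpa [smul_smul] using hr.refl x⟩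
  · rintro r' hr' hsub hfix x y ⟨j, hj, hxy⟩
    exact hr'.trans (hsub _ _ hxy) (hr'.symm (hfix y j hj))
end

section
/- Let p be a prime and let G be a group acting on a finite set X with more than one element, such that the image of the permutation representation G → Sym(X) is a finite p-group. Let V be a subgroup of G of order p which is contained in the normal subgroup of G generated by the set of all p-th powers {g^p : g ∈ G} together with all commutators [g,h] (g, h ∈ G). Then V does not act transitively on X. -/
/-- Let `G` act on a finite set `X` with more than one element, with
`p`-group image in `Sym(X)`. If `V ⊆ G` has order `p` and is contained in the
normal subgroup generated by `p`-th powers and commutators, then `V` does not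
act transitively on `X`. -/
theorem stmt7 (p : ℕ) (hp : p.Prime)
    (G : Type*) [Group G] (X : Type*) [Finite X] [MulAction G X]
    (hX : 1 < Nat.card X)
    (himg : ∃ k : ℕ, Nat.card (MulAction.toPermHom G X).range = p ^ k)
    (V : Subgroup G) (hV : Nat.card V = p)
    (hVker : V ≤ Subgroup.normalClosure
      {x : G | (∃ y : G, x = y ^ p) ∨ ∃ a b : G, x = a * b * a⁻¹ * b⁻¹}) :
    ¬ ∀ x y : X, ∃ v ∈ V, v • x = y := by
  classical
  intro h
  set φ := MulAction.toPermHom G X with hφ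
  haveI : Fact p.Prime := ⟨hp⟩
  -- X is nontrivial
  haveI : Nontrivial X := Finite.one_lt_card_iff_nontrivial.mp (by
    cases nonempty_fintype X
    simpa [Nat.card_eq_fintype_card] using hX)
  obtain ⟨x0, y0, hxy⟩ := exists_pair_ne X
  -- V is finite
  haveI hVfin : Finite V := Nat.finite_of_card_ne_zero (by rw [hV]; exact hp.pos.ne')
  cases nonempty_fintype X
  haveI := Fintype.ofFinite (↥V)
  -- the orbit of V on x0 is everything
  have horb : MulAction.orbit V x0 = Set.univ := by
    ext y
    simp only [Set.mem_univ, iff_true]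
    obtain ⟨v, hv, hvx⟩ := h x0 y
    exact ⟨⟨v, hv⟩, hvx⟩
  -- card X divides p
  have hdvd : Nat.card X ∣ p := by
    have h1 := MulAction.card_orbit_mul_card_stabilizer_eq_card_group (↥V) x0
    have h2 : Nat.card X = Nat.card (MulAction.orbit (↥V) x0) := by
      rw [horb]; exact (Nat.card_congr (Equiv.Set.univ X)).symm
    rw [h2, ← hV, Nat.card_eq_fintype_card, Nat.card_eq_fintype_card]
    exact ⟨_, h1.symm⟩
  have hcard : Nat.card X = p := by
    rcases (hp.eq_one_or_self_of_dvd _ hdvd) with h1 | h1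
    · omega
    · exact h1
  -- the image has order dividing p
  obtain ⟨k, hk⟩ := himg
  have hrange_dvd : Nat.card φ.range ∣ p := by
    have hdvd2 : Nat.card φ.range ∣ Nat.card (Equiv.Perm X) :=
      Subgroup.card_subgroup_dvd_card _
    have hperm : Nat.card (Equiv.Perm X) = Nat.factorial p := by
      rw [Nat.card_eq_fintype_card, Fintype.card_perm, ← Nat.card_eq_fintype_card, hcard]
    rw [hperm, hk] at hdvd2
    have hk1 : k ≤ 1 := by
      by_contra hk1
      push_neg at hk1
      have : p ^ 2 ∣ Nat.factorial p := dvd_trans (pow_dvd_pow p hk1) hdvd2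
      have hfac : Nat.factorial p = p * Nat.factorial (p - 1) := by
        conv_lhs => rw [show p = (p - 1) + 1 by omega]
        rw [Nat.factorial_succ]
        congr 1
        omega
      rw [hfac, pow_two] at this
      have : p ∣ Nat.factorial (p - 1) := (Nat.mul_dvd_mul_iff_left hp.pos).mp this
      have := (Nat.Prime.dvd_factorial hp).mp this
      omega
    rw [hk]
    calc p ^ k ∣ p ^ 1 := pow_dvd_pow p hk1
      _ = p := pow_one p
  -- every element of the range satisfies q ^ p = 1
  have hpow : ∀ g : G, φ g ^ p = 1 := by
    intro g
    have : (⟨φ g, ⟨g, rfl⟩⟩ : φ.range) ^ p = 1 := by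
      apply orderOf_dvd_iff_pow_eq_one.mp
      exact dvd_trans (orderOf_dvd_natCard _) hrange_dvd
    have := congrArg (Subtype.val) this
    simpa using this
  -- the range is commutative
  have hcomm : ∀ a b : G, φ a * φ b = φ b * φ a := by
    rcases (hp.eq_one_or_self_of_dvd _ hrange_dvd) with h1 | h1
    · intro a b
      have hbot := Subgroup.card_eq_one.mp h1
      have ha : φ a = 1 := by
        have : φ a ∈ φ.range := ⟨a, rfl⟩
        rw [hbot] at this
        exact this
      have hb : φ b = 1 := by
        have : φ b ∈ φ.range := ⟨b, rfl⟩
        rw [hbot] at this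
        exact this
      rw [ha, hb]
    · haveI : IsCyclic φ.range := isCyclic_of_prime_card h1
      letI : CommGroup φ.range := IsCyclic.commGroup
      intro a b
      have := mul_comm (⟨φ a, ⟨a, rfl⟩⟩ : φ.range) (⟨φ b, ⟨b, rfl⟩⟩ : φ.range)
      have := congrArg (Subtype.val) this
      simpa using this
  -- the generating set lies in the kernel of φ
  have hsub : {x : G | (∃ y : G, x = y ^ p) ∨ ∃ a b : G, x = a * b * a⁻¹ * b⁻¹} ⊆ φ.ker := by
    rintro x (⟨y, rfl⟩ | ⟨a, b, rfl⟩)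
    · show φ (y ^ p) = 1
      rw [map_pow]
      exact hpow y
    · show φ (a * b * a⁻¹ * b⁻¹) = 1
      rw [map_mul, map_mul, map_mul, map_inv, map_inv, hcomm a b]
      group
  have hVk : V ≤ φ.ker := le_trans hVker (Subgroup.normalClosure_le_normal hsub)
  -- contradiction with transitivity
  obtain ⟨v, hv, hvx⟩ := h x0 y0
  have : φ v = 1 := hVk hv
  have : v • x0 = x0 := by
    have := congrArg (fun e => e x0) this
    simpa [φ, MulAction.toPermHom] using this
  exact hxy (this.symm.trans hvx)
end

section
/- Equip ℂ² = EuclideanSpace ℂ (Fin 2) with its standard Hermitian inner product, and let ℙ(ℂ²) denote the complex projective line, namely the space of nonzero vectors of ℂ² modulo scalar multiplication, with the quotient topology; its points correspond to one-dimensional subspaces (lines) of ℂ². Define an equivalence relation ≈ on ℙ(ℂ²) by declaring two points equivalent if and only if their corresponding lines L, L' satisfy L = L' or L' = Lᗮ (the orthogonal complement of L). Then the quotient space ℙ(ℂ²)/≈ is homeomorphic to the real projective plane ℝP², the projectivization of ℝ³. -/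
open scoped LinearAlgebra.Projectivization

/-- The quotient topology on a projectivization (projective space), induced from
the subspace topology on the set of nonzero vectors. -/
instance projectivizationTopology (K V : Type*) [DivisionRing K] [AddCommGroup V]
    [Module K V] [TopologicalSpace V] : TopologicalSpace (Projectivization K V) :=
  instTopologicalSpaceQuotient

namespace Stmt10Aux

open Complex

noncomputable section

abbrev V2 := EuclideanSpace ℂ (Fin 2)
abbrev W3 := EuclideanSpace ℝ (Fin 3)

def hopf (v : V2) : W3 :=
  WithLp.toLp 2 ![2 * (v 0 * (starRingEnd ℂ) (v 1)).re, 2 * (v 0 * (starRingEnd ℂ) (v 1)).im,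
    Complex.normSq (v 0) - Complex.normSq (v 1)]

lemma hopf_continuous : Continuous hopf := by
  have h0 : Continuous fun v : V2 => v 0 :=
    (continuous_apply (0 : Fin 2)).comp (PiLp.continuous_ofLp 2 fun _ : Fin 2 => ℂ)
  have h1 : Continuous fun v : V2 => v 1 :=
    (continuous_apply (1 : Fin 2)).comp (PiLp.continuous_ofLp 2 fun _ : Fin 2 => ℂ)
  have hm : Continuous fun v : V2 => v 0 * (starRingEnd ℂ) (v 1) :=
    h0.mul (Complex.continuous_conj.comp h1)
  have h : Continuous fun v : V2 => (![2 * (v 0 * (starRingEnd ℂ) (v 1)).re,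
      2 * (v 0 * (starRingEnd ℂ) (v 1)).im,
      Complex.normSq (v 0) - Complex.normSq (v 1)] : Fin 3 → ℝ) := by
    apply continuous_pi
    intro i
    fin_cases i
    · exact continuous_const.mul (Complex.continuous_re.comp hm)
    · exact continuous_const.mul (Complex.continuous_im.comp hm)
    · exact (Complex.continuous_normSq.comp h0).sub (Complex.continuous_normSq.comp h1)
  exact (PiLp.continuous_toLp 2 fun _ : Fin 3 => ℝ).comp h

lemma vec_ne_zero_iff (v : V2) : v ≠ 0 ↔ v 0 ≠ 0 ∨ v 1 ≠ 0 := by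
  rw [← not_iff_not]
  push_neg
  constructor
  · rintro rfl; exact ⟨rfl, rfl⟩
  · rintro ⟨hh0, hh1⟩; ext i; fin_cases i <;> assumption

lemma hopf_ne_zero {v : V2} (hv : v ≠ 0) : hopf v ≠ 0 := by
  intro h
  have h0 : 2 * (v 0 * (starRingEnd ℂ) (v 1)).re = 0 := congrArg (fun u : W3 => u 0) h
  have h1 : 2 * (v 0 * (starRingEnd ℂ) (v 1)).im = 0 := congrArg (fun u : W3 => u 1) h
  have h2 : Complex.normSq (v 0) - Complex.normSq (v 1) = 0 := congrArg (fun u : W3 => u 2) h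
  have hre : (v 0 * (starRingEnd ℂ) (v 1)).re = 0 := by linarith
  have him : (v 0 * (starRingEnd ℂ) (v 1)).im = 0 := by linarith
  have hmul : v 0 * (starRingEnd ℂ) (v 1) = 0 :=
    Complex.ext (by rw [hre, Complex.zero_re]) (by rw [him, Complex.zero_im])
  rcases mul_eq_zero.1 hmul with hc | hc
  · have hv1 : v 1 = 0 := Complex.normSq_eq_zero.1 (by rw [hc] at h2; simpa using h2.symm)
    exact ((vec_ne_zero_iff v).1 hv).elim (fun hh => hh hc) fun hh => hh hv1
  · have hv1 : v 1 = 0 := by simpa using hc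
    have hv0 : v 0 = 0 := Complex.normSq_eq_zero.1 (by rw [hv1] at h2; simpa using h2)
    exact ((vec_ne_zero_iff v).1 hv).elim (fun hh => hh hv0) fun hh => hh hv1

lemma hopf_smul (c : ℂ) (v : V2) : hopf (c • v) = Complex.normSq c • hopf v := by
  have key : (c • v) 0 * (starRingEnd ℂ) ((c • v) 1)
      = (Complex.normSq c : ℂ) * (v 0 * (starRingEnd ℂ) (v 1)) := by
    show (c * v 0) * (starRingEnd ℂ) (c * v 1) = _
    rw [map_mul, ← Complex.mul_conj]
    ring
  ext i
  fin_cases i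
  · show 2 * ((c • v) 0 * (starRingEnd ℂ) ((c • v) 1)).re
      = Complex.normSq c * (2 * (v 0 * (starRingEnd ℂ) (v 1)).re)
    rw [key, Complex.re_ofReal_mul]; ring
  · show 2 * ((c • v) 0 * (starRingEnd ℂ) ((c • v) 1)).im
      = Complex.normSq c * (2 * (v 0 * (starRingEnd ℂ) (v 1)).im)
    rw [key, Complex.im_ofReal_mul]; ring
  · show Complex.normSq ((c • v) 0) - Complex.normSq ((c • v) 1)
      = Complex.normSq c * (Complex.normSq (v 0) - Complex.normSq (v 1))
    show Complex.normSq (c * v 0) - Complex.normSq (c * v 1) = _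
    rw [map_mul, map_mul]; ring

lemma hopf_orth {v w : V2} (hv : v ≠ 0) (hw : w ≠ 0)
    (h : (starRingEnd ℂ) (v 0) * w 0 + (starRingEnd ℂ) (v 1) * w 1 = 0) :
    ∃ r : ℝ, r ≠ 0 ∧ hopf w = r • hopf v := by
  obtain ⟨μ, hc, hd⟩ : ∃ μ : ℂ, w 0 = -μ * (starRingEnd ℂ) (v 1)
      ∧ w 1 = μ * (starRingEnd ℂ) (v 0) := by
    by_cases h0 : v 0 = 0
    · have h1 : v 1 ≠ 0 := ((vec_ne_zero_iff v).1 hv).resolve_left (fun hh => hh h0)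
      have hw1 : w 1 = 0 := by
        have : (starRingEnd ℂ) (v 1) * w 1 = 0 := by rw [h0] at h; simpa using h
        rcases mul_eq_zero.1 this with hh | hh
        · exact absurd ((map_eq_zero _).1 hh) h1
        · exact hh
      have hconj : (starRingEnd ℂ) (v 1) ≠ 0 := by simpa using h1
      refine ⟨-(w 0 / (starRingEnd ℂ) (v 1)), ?_, ?_⟩
      · rw [neg_neg, div_mul_cancel₀ _ hconj]
      · rw [h0, hw1]; simp
    · have hconj : (starRingEnd ℂ) (v 0) ≠ 0 := by simpa using h0
      refine ⟨w 1 / (starRingEnd ℂ) (v 0), ?_, ?_⟩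
      · rw [neg_mul, div_mul_eq_mul_div, ← neg_div, eq_comm, div_eq_iff hconj]
        linear_combination -h
      · rw [div_mul_cancel₀ _ hconj]
  have hμ : μ ≠ 0 := by
    rintro rfl
    simp only [neg_mul, zero_mul, neg_zero, zero_mul] at hc hd
    exact hw (PiLp.ext fun i => by fin_cases i <;> simp [hc, hd])
  refine ⟨-Complex.normSq μ, by simpa using hμ, ?_⟩
  have key : w 0 * (starRingEnd ℂ) (w 1)
      = ((-Complex.normSq μ : ℝ) : ℂ) * (v 0 * (starRingEnd ℂ) (v 1)) := by
    rw [hc, hd, map_mul, Complex.conj_conj, Complex.ofReal_neg, ← Complex.mul_conj]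
    ring
  ext i
  fin_cases i
  · show 2 * (w 0 * (starRingEnd ℂ) (w 1)).re = -Complex.normSq μ * (2 * _)
    rw [key, Complex.re_ofReal_mul]; ring
  · show 2 * (w 0 * (starRingEnd ℂ) (w 1)).im = -Complex.normSq μ * (2 * _)
    rw [key, Complex.im_ofReal_mul]; ring
  · show Complex.normSq (w 0) - Complex.normSq (w 1)
      = -Complex.normSq μ * (Complex.normSq (v 0) - Complex.normSq (v 1))
    rw [hc, hd, map_mul, map_mul, Complex.normSq_neg, Complex.normSq_conj,
      Complex.normSq_conj]
    ring

lemma hopf_dichotomy {v w : V2} (hv : v ≠ 0) (hw : w ≠ 0) {t : ℝ}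
    (h : hopf v = t • hopf w) :
    (∃ c : ℂ, c • w = v) ∨
      (starRingEnd ℂ) (v 0) * w 0 + (starRingEnd ℂ) (v 1) * w 1 = 0 := by
  set a := v 0 with ha0
  set b := v 1 with hb0
  set c := w 0 with hc0
  set d := w 1 with hd0
  have h0 : 2 * (a * (starRingEnd ℂ) b).re = t * (2 * (c * (starRingEnd ℂ) d).re) :=
    congrArg (fun u : W3 => u 0) h
  have h1 : 2 * (a * (starRingEnd ℂ) b).im = t * (2 * (c * (starRingEnd ℂ) d).im) :=
    congrArg (fun u : W3 => u 1) h
  have h2 : Complex.normSq a - Complex.normSq b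
      = t * (Complex.normSq c - Complex.normSq d) := congrArg (fun u : W3 => u 2) h
  have hprod : a * (starRingEnd ℂ) b = (t : ℂ) * (c * (starRingEnd ℂ) d) := by
    apply Complex.ext
    · rw [Complex.re_ofReal_mul]; linarith
    · rw [Complex.im_ofReal_mul]; linarith
  have hconj : (starRingEnd ℂ) a * b = (t : ℂ) * ((starRingEnd ℂ) c * d) := by
    have := congrArg (starRingEnd ℂ) hprod
    simpa [map_mul, Complex.conj_conj, Complex.conj_ofReal, mul_comm] using this
  have hAB : Complex.normSq a * Complex.normSq b
      = t ^ 2 * (Complex.normSq c * Complex.normSq d) := by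
    have := congrArg Complex.normSq hprod
    simpa [map_mul, Complex.normSq_conj, Complex.normSq_ofReal, sq, mul_assoc] using this
  have step1 : (Complex.normSq a + Complex.normSq b) ^ 2
      = (|t| * (Complex.normSq c + Complex.normSq d)) ^ 2 := by
    rw [mul_pow, _root_.sq_abs]
    linear_combination (Complex.normSq a - Complex.normSq b
      + t * (Complex.normSq c - Complex.normSq d)) * h2 + 4 * hAB
  have step2 : Complex.normSq a + Complex.normSq b
      = |t| * (Complex.normSq c + Complex.normSq d) := by
    have n1 := Complex.normSq_nonneg a
    have n2 := Complex.normSq_nonneg b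
    have n3 := Complex.normSq_nonneg c
    have n4 := Complex.normSq_nonneg d
    have e1 := Real.sqrt_sq (by linarith : (0:ℝ) ≤ Complex.normSq a + Complex.normSq b)
    have e2 := Real.sqrt_sq (mul_nonneg (abs_nonneg t) (by linarith) :
      (0:ℝ) ≤ |t| * (Complex.normSq c + Complex.normSq d))
    rw [← e1, ← e2, step1]
  -- t ≠ 0
  have hwnz : Complex.normSq c + Complex.normSq d > 0 := by
    rcases (vec_ne_zero_iff w).1 hw with hh | hh
    · have h5 := Complex.normSq_pos.2 hh
      have h6 := Complex.normSq_nonneg d; linarith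
    · have h5 := Complex.normSq_pos.2 hh
      have h6 := Complex.normSq_nonneg c; linarith
  have hvnz : Complex.normSq a + Complex.normSq b > 0 := by
    rcases (vec_ne_zero_iff v).1 hv with hh | hh
    · have h5 := Complex.normSq_pos.2 hh
      have h6 := Complex.normSq_nonneg b; linarith
    · have h5 := Complex.normSq_pos.2 hh
      have h6 := Complex.normSq_nonneg a; linarith
  have ht : t ≠ 0 := by
    rintro rfl
    rw [abs_zero, zero_mul] at step2
    linarith
  rcases ht.lt_or_gt with htneg | htpos
  · -- t < 0 : orthogonal case
    right
    have habs : |t| = -t := abs_of_neg htneg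
    rw [habs] at step2
    have ra : Complex.normSq a = -t * Complex.normSq d := by linarith
    have rb : Complex.normSq b = -t * Complex.normSq c := by linarith
    have ha' : a * (starRingEnd ℂ) a = -(t:ℂ) * (d * (starRingEnd ℂ) d) := by
      rw [Complex.mul_conj, Complex.mul_conj, ra]; push_cast; ring
    have hb' : b * (starRingEnd ℂ) b = -(t:ℂ) * (c * (starRingEnd ℂ) c) := by
      rw [Complex.mul_conj, Complex.mul_conj, rb]; push_cast; ring
    have key : ((starRingEnd ℂ) a * c + (starRingEnd ℂ) b * d)
        * (a * (starRingEnd ℂ) c + b * (starRingEnd ℂ) d) = 0 := by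
      linear_combination (c * (starRingEnd ℂ) c) * ha' + (d * (starRingEnd ℂ) d) * hb'
        + (c * (starRingEnd ℂ) d) * hconj + ((starRingEnd ℂ) c * d) * hprod
    have key2 : ((starRingEnd ℂ) a * c + (starRingEnd ℂ) b * d)
        * (starRingEnd ℂ) ((starRingEnd ℂ) a * c + (starRingEnd ℂ) b * d) = 0 := by
      rw [map_add, map_mul, map_mul, Complex.conj_conj, Complex.conj_conj]
      exact key
    rw [Complex.mul_conj] at key2
    have hz0 : Complex.normSq ((starRingEnd ℂ) a * c + (starRingEnd ℂ) b * d) = 0 := by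
      exact_mod_cast key2
    exact Complex.normSq_eq_zero.1 hz0
  · -- t > 0 : proportional case
    left
    have habs : |t| = t := abs_of_pos htpos
    rw [habs] at step2
    have ra : Complex.normSq a = t * Complex.normSq c := by linarith
    have rb : Complex.normSq b = t * Complex.normSq d := by linarith
    have ha' : a * (starRingEnd ℂ) a = (t:ℂ) * (c * (starRingEnd ℂ) c) := by
      rw [Complex.mul_conj, Complex.mul_conj, ra]; push_cast; ring
    have hb' : b * (starRingEnd ℂ) b = (t:ℂ) * (d * (starRingEnd ℂ) d) := by
      rw [Complex.mul_conj, Complex.mul_conj, rb]; push_cast; ring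
    have key : (a * d - b * c) * ((starRingEnd ℂ) a * (starRingEnd ℂ) d
        - (starRingEnd ℂ) b * (starRingEnd ℂ) c) = 0 := by
      linear_combination (d * (starRingEnd ℂ) d) * ha' + (c * (starRingEnd ℂ) c) * hb'
        - (d * (starRingEnd ℂ) c) * hprod - ((starRingEnd ℂ) d * c) * hconj
    have key2 : (a * d - b * c) * (starRingEnd ℂ) (a * d - b * c) = 0 := by
      rw [map_sub, map_mul, map_mul]
      exact key
    rw [Complex.mul_conj] at key2
    have had : a * d = b * c := by
      have hz0 : Complex.normSq (a * d - b * c) = 0 := by exact_mod_cast key2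
      exact sub_eq_zero.1 (Complex.normSq_eq_zero.1 hz0)
    by_cases hcz : c = 0
    · have hdz : d ≠ 0 := ((vec_ne_zero_iff w).1 hw).resolve_left (fun hh => hh hcz)
      have haz : a = 0 := by
        rcases mul_eq_zero.1 (by rw [had, hcz, mul_zero]) with hh | hh
        · exact hh
        · exact absurd hh hdz
      refine ⟨b / d, PiLp.ext fun i => ?_⟩
      fin_cases i
      · show b / d * c = a
        rw [hcz, mul_zero, haz]
      · show b / d * d = b
        rw [div_mul_cancel₀ _ hdz]
    · refine ⟨a / c, PiLp.ext fun i => ?_⟩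
      fin_cases i
      · show a / c * c = a
        rw [div_mul_cancel₀ _ hcz]
      · show a / c * d = b
        field_simp
        linear_combination had

lemma hopf_surj_aux (u : W3) (hu : u ≠ 0) :
    ∃ (v : V2) (_ : v ≠ 0) (t : ℝ), t ≠ 0 ∧ hopf v = t • u := by
  set x := u 0 with hx
  set y := u 1 with hy
  set z := u 2 with hz
  by_cases hxy : x = 0 ∧ y = 0
  · have hz0 : z ≠ 0 := by
      intro hzz
      exact hu (PiLp.ext fun i => by fin_cases i <;> simp [← hx, ← hy, ← hz, hxy.1, hxy.2, hzz])
    refine ⟨!₂[1, 0], ?_, z⁻¹, inv_ne_zero hz0, ?_⟩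
    · intro hh
      have : (1 : ℂ) = 0 := congrArg (fun u : V2 => u 0) hh
      simp at this
    · ext i
      fin_cases i
      · show 2 * ((1 : ℂ) * (starRingEnd ℂ) (0:ℂ)).re = z⁻¹ * x
        rw [hxy.1]; simp
      · show 2 * ((1 : ℂ) * (starRingEnd ℂ) (0:ℂ)).im = z⁻¹ * y
        rw [hxy.2]; simp
      · show Complex.normSq 1 - Complex.normSq 0 = z⁻¹ * z
        rw [inv_mul_cancel₀ hz0]; simp
  · have hxy2 : 0 < x ^ 2 + y ^ 2 := by
      rcases not_and_or.1 hxy with hh | hh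
      · have : x ^ 2 > 0 := by positivity
        nlinarith [sq_nonneg y]
      · have : y ^ 2 > 0 := by positivity
        nlinarith [sq_nonneg x]
    set r := Real.sqrt (x ^ 2 + y ^ 2 + z ^ 2) with hr
    have hrpos : 0 < r := Real.sqrt_pos.2 (by nlinarith [sq_nonneg z])
    have hr2 : r ^ 2 = x ^ 2 + y ^ 2 + z ^ 2 := Real.sq_sqrt (by nlinarith [sq_nonneg z])
    have hrz : 0 < r + z := by
      rcases le_or_gt z 0 with hzneg | hzpos
      · nlinarith
      · linarith
    set s := Real.sqrt (r + z) with hs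
    have hspos : 0 < s := Real.sqrt_pos.2 hrz
    have hs2 : s ^ 2 = r + z := Real.sq_sqrt hrz.le
    have hsne : s ≠ 0 := hspos.ne'
    refine ⟨!₂[(s : ℂ), ⟨x / s, -(y / s)⟩], ?_, 2, two_ne_zero, ?_⟩
    · intro hh
      have : (s : ℂ) = 0 := congrArg (fun u : V2 => u 0) hh
      rw [Complex.ofReal_eq_zero] at this
      exact hsne this
    · have hmul : ((s : ℂ) * (starRingEnd ℂ) (⟨x / s, -(y / s)⟩ : ℂ)) = ⟨x, y⟩ := by
        apply Complex.ext <;>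
          simp [Complex.mul_re, Complex.mul_im] <;> field_simp
      ext i
      fin_cases i
      · show 2 * ((s : ℂ) * (starRingEnd ℂ) (⟨x / s, -(y / s)⟩ : ℂ)).re = 2 * x
        rw [hmul]
      · show 2 * ((s : ℂ) * (starRingEnd ℂ) (⟨x / s, -(y / s)⟩ : ℂ)).im = 2 * y
        rw [hmul]
      · show Complex.normSq (s : ℂ) - Complex.normSq (⟨x / s, -(y / s)⟩ : ℂ) = 2 * z
        rw [Complex.normSq_ofReal]
        have : Complex.normSq (⟨x / s, -(y / s)⟩ : ℂ) = (x ^ 2 + y ^ 2) / s ^ 2 := by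
          rw [Complex.normSq_mk]
          field_simp
        rw [this, hs2]
        field_simp
        nlinarith [hr2, hrz]

/-- The induced map on projective spaces. -/
def hopfP : ℙ ℂ V2 → ℙ ℝ W3 := fun P =>
  Quotient.liftOn' P (fun v => Projectivization.mk ℝ (hopf v.1) (hopf_ne_zero v.2))
    (by
      rintro ⟨v, hv⟩ ⟨w, hw⟩ hrel
      have hmk : Projectivization.mk ℂ v hv = Projectivization.mk ℂ w hw :=
        Quotient.sound' hrel
      obtain ⟨c, hc⟩ := (Projectivization.mk_eq_mk_iff' ℂ v w hv hw).1 hmk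
      have hcne : Complex.normSq c ≠ 0 := by
        intro hh
        rw [Complex.normSq_eq_zero] at hh
        rw [hh, zero_smul] at hc
        exact hv hc.symm
      refine ((Projectivization.mk_eq_mk_iff' ℝ _ _ _ _).2 ⟨Complex.normSq c, ?_⟩)
      rw [← hopf_smul, hc])

lemma hopfP_mk (v : V2) (hv : v ≠ 0) :
    hopfP (Projectivization.mk ℂ v hv) = Projectivization.mk ℝ (hopf v) (hopf_ne_zero hv) :=
  rfl

lemma hopfP_continuous : Continuous hopfP := by
  apply Continuous.quotient_liftOn'
  exact continuous_quotient_mk'.comp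
    ((hopf_continuous.comp continuous_subtype_val).subtype_mk _)

lemma sphere_ne_zero (v : Metric.sphere (0 : V2) 1) : (v : V2) ≠ 0 := by
  intro hh
  have hn := v.2
  rw [mem_sphere_iff_norm, hh] at hn
  simp at hn

def sphereToProj : Metric.sphere (0 : V2) 1 → ℙ ℂ V2 :=
  fun v => Projectivization.mk ℂ v.1 (sphere_ne_zero v)

instance : CompactSpace (ℙ ℂ V2) := by
  have hsurj : Function.Surjective sphereToProj := by
    intro P
    induction P using Projectivization.ind with
    | h v hv =>
      have hnv : ‖v‖ ≠ 0 := norm_ne_zero_iff.2 hv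
      refine ⟨⟨((‖v‖ : ℂ))⁻¹ • v, ?_⟩, ?_⟩
      · rw [mem_sphere_iff_norm, sub_zero, norm_smul, norm_inv, Complex.norm_real,
          norm_norm, inv_mul_cancel₀ hnv]
      · exact (Projectivization.mk_eq_mk_iff' ℂ _ _ _ _).2 ⟨((‖v‖ : ℂ))⁻¹, rfl⟩
  have hcont : Continuous sphereToProj :=
    continuous_quotient_mk'.comp (continuous_subtype_val.subtype_mk _)
  constructor
  rw [← Set.range_eq_univ.2 hsurj]
  exact isCompact_range hcont

lemma w3_exists_ne_zero {u : W3} (hu : u ≠ 0) : ∃ i, u i ≠ 0 := by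
  by_contra hh
  push_neg at hh
  exact hu (PiLp.ext hh)

/-- Map to "projection matrices", used to establish the Hausdorff property. -/
def projW : ℙ ℝ W3 → (Fin 3 → Fin 3 → ℝ) := fun P =>
  Quotient.liftOn' P (fun u => fun i j => u.1 i * u.1 j / ‖u.1‖ ^ 2)
    (by
      rintro ⟨v, hv⟩ ⟨w, hw⟩ hrel
      have hmk : Projectivization.mk ℝ v hv = Projectivization.mk ℝ w hw :=
        Quotient.sound' hrel
      obtain ⟨a, ha⟩ := (Projectivization.mk_eq_mk_iff' ℝ v w hv hw).1 hmk
      have hane : a ≠ 0 := by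
        rintro rfl
        rw [zero_smul] at ha
        exact hv ha.symm
      have hwne : ‖w‖ ≠ 0 := norm_ne_zero_iff.2 hw
      funext i j
      show v i * v j / ‖v‖ ^ 2 = w i * w j / ‖w‖ ^ 2
      rw [← ha]
      show a * w i * (a * w j) / ‖a • w‖ ^ 2 = _
      rw [norm_smul, Real.norm_eq_abs, mul_pow, _root_.sq_abs]
      rw [div_eq_div_iff (by positivity) (by positivity)]
      ring)

lemma projW_mk (u : W3) (hu : u ≠ 0) (i j : Fin 3) :
    projW (Projectivization.mk ℝ u hu) i j = u i * u j / ‖u‖ ^ 2 := rfl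

lemma projW_injective : Function.Injective projW := by
  intro P Q h
  induction P using Projectivization.ind with
  | h v hv =>
  induction Q using Projectivization.ind with
  | h w hw =>
  obtain ⟨i, hi⟩ := w3_exists_ne_zero hv
  have hvne : ‖v‖ ≠ 0 := norm_ne_zero_iff.2 hv
  have hwne : ‖w‖ ≠ 0 := norm_ne_zero_iff.2 hw
  have hii : v i * v i / ‖v‖ ^ 2 = w i * w i / ‖w‖ ^ 2 := by
    have := congrFun (congrFun h i) i
    rwa [projW_mk, projW_mk] at this
  have hwi : w i ≠ 0 := by
    intro hh
    rw [hh, mul_zero, zero_div, div_eq_zero_iff] at hii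
    rcases hii with hh2 | hh2
    · exact hi (by nlinarith [mul_self_nonneg (v i)])
    · exact hvne (by nlinarith [norm_nonneg v])
  refine ((Projectivization.mk_eq_mk_iff' ℝ _ _ hv hw).2
    ⟨w i * ‖v‖ ^ 2 / (v i * ‖w‖ ^ 2), PiLp.ext fun j => ?_⟩)
  have hij : v i * v j / ‖v‖ ^ 2 = w i * w j / ‖w‖ ^ 2 := by
    have := congrFun (congrFun h i) j
    rwa [projW_mk, projW_mk] at this
  show w i * ‖v‖ ^ 2 / (v i * ‖w‖ ^ 2) * w j = v j
  rw [div_mul_eq_mul_div, div_eq_iff (by positivity)]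
  rw [div_eq_div_iff (by positivity) (by positivity)] at hij
  linarith [hij, mul_comm (v i * v j) (‖w‖ ^ 2), mul_comm (w i * w j) (‖v‖ ^ 2)]

lemma projW_continuous : Continuous projW := by
  apply Continuous.quotient_liftOn'
  apply continuous_pi
  intro i
  apply continuous_pi
  intro j
  have hcoord : ∀ k : Fin 3, Continuous fun u : {u : W3 // u ≠ 0} => u.1 k := fun k =>
    (continuous_apply k).comp ((PiLp.continuous_ofLp 2 fun _ : Fin 3 => ℝ).comp
      continuous_subtype_val)
  exact ((hcoord i).mul (hcoord j)).div
    ((continuous_norm.comp continuous_subtype_val).pow 2)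
    fun u => pow_ne_zero 2 (norm_ne_zero_iff.2 u.2)

instance : T2Space (ℙ ℝ W3) := by
  constructor
  intro x y hxy
  exact separated_by_continuous projW_continuous fun hh => hxy (projW_injective hh)

/-- The quotient relation from the statement. -/
def QRel : ℙ ℂ V2 → ℙ ℂ V2 → Prop := fun P Q =>
  P.submodule = Q.submodule ∨ Q.submodule = P.submoduleᗮ

lemma inner_expand (v w : V2) :
    (inner ℂ v w : ℂ) = (starRingEnd ℂ) (v 0) * w 0 + (starRingEnd ℂ) (v 1) * w 1 := by
  simp [PiLp.inner_apply, RCLike.inner_apply, Fin.sum_univ_two]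
  ring

instance : Fact (Module.finrank ℂ V2 = 1 + 1) :=
  ⟨by rw [finrank_euclideanSpace_fin]⟩

lemma orth_submodule {v w : V2} (hv : v ≠ 0) (hw : w ≠ 0)
    (h : (starRingEnd ℂ) (v 0) * w 0 + (starRingEnd ℂ) (v 1) * w 1 = 0) :
    (Projectivization.mk ℂ w hw).submodule = (Projectivization.mk ℂ v hv).submoduleᗮ := by
  rw [Projectivization.submodule_mk, Projectivization.submodule_mk]
  have hmem : w ∈ (ℂ ∙ v)ᗮ :=
    Submodule.mem_orthogonal_singleton_iff_inner_right.2 (by rw [inner_expand]; exact h)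
  refine (Submodule.eq_of_le_of_finrank_eq
    ((Submodule.span_singleton_le_iff_mem _ _).2 hmem) ?_)
  rw [finrank_span_singleton hw, Submodule.finrank_orthogonal_span_singleton (n := 1) hv]

lemma submodule_orth_inner {v w : V2} (hv : v ≠ 0) (hw : w ≠ 0)
    (h : (Projectivization.mk ℂ w hw).submodule = (Projectivization.mk ℂ v hv).submoduleᗮ) :
    (starRingEnd ℂ) (v 0) * w 0 + (starRingEnd ℂ) (v 1) * w 1 = 0 := by
  rw [Projectivization.submodule_mk, Projectivization.submodule_mk] at h
  have hmem : w ∈ (ℂ ∙ v)ᗮ := by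
    rw [← h]
    exact Submodule.mem_span_singleton_self w
  have := Submodule.mem_orthogonal_singleton_iff_inner_right.1 hmem
  rwa [inner_expand] at this

lemma hopfP_sound {P Q : ℙ ℂ V2} (h : QRel P Q) : hopfP P = hopfP Q := by
  induction P using Projectivization.ind with
  | h v hv =>
  induction Q using Projectivization.ind with
  | h w hw =>
  rcases h with h | h
  · rw [Projectivization.submodule_injective h]
  · have hinner := submodule_orth_inner hv hw h
    obtain ⟨r, hr, hrw⟩ := hopf_orth hv hw hinner
    rw [hopfP_mk, hopfP_mk]
    exact ((Projectivization.mk_eq_mk_iff' ℝ _ _ _ _).2 ⟨r, hrw.symm⟩).symm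

/-- The full map on the quotient. -/
def hopfQ : Quot QRel → ℙ ℝ W3 :=
  Quot.lift hopfP fun _ _ h => hopfP_sound h

lemma hopfQ_injective : Function.Injective hopfQ := by
  intro x y
  induction x using Quot.ind with
  | mk P =>
  induction y using Quot.ind with
  | mk Q =>
  induction P using Projectivization.ind with
  | h v hv =>
  induction Q using Projectivization.ind with
  | h w hw =>
  intro h
  have h' : Projectivization.mk ℝ (hopf v) (hopf_ne_zero hv)
      = Projectivization.mk ℝ (hopf w) (hopf_ne_zero hw) := h
  obtain ⟨t, ht⟩ := (Projectivization.mk_eq_mk_iff' ℝ _ _ _ _).1 h'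
  rcases hopf_dichotomy hv hw ht.symm with ⟨c, hc⟩ | hinner
  · have : Projectivization.mk ℂ v hv = Projectivization.mk ℂ w hw :=
      (Projectivization.mk_eq_mk_iff' ℂ _ _ _ _).2 ⟨c, hc⟩
    rw [this]
  · exact Quot.sound (Or.inr (orth_submodule hv hw hinner))

lemma hopfQ_surjective : Function.Surjective hopfQ := by
  intro R
  induction R using Projectivization.ind with
  | h u hu =>
  obtain ⟨v, hv, t, ht, hvu⟩ := hopf_surj_aux u hu
  refine ⟨Quot.mk QRel (Projectivization.mk ℂ v hv), ?_⟩
  show hopfP (Projectivization.mk ℂ v hv) = _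
  rw [hopfP_mk]
  exact (Projectivization.mk_eq_mk_iff' ℝ _ _ _ _).2 ⟨t, hvu.symm⟩

lemma hopfQ_continuous : Continuous hopfQ :=
  continuous_quot_lift _ hopfP_continuous

instance : CompactSpace (Quot QRel) := by
  constructor
  rw [← Set.range_eq_univ.2 (Quot.mk_surjective : Function.Surjective (Quot.mk QRel))]
  exact isCompact_range continuous_quot_mk

end

end Stmt10Aux

/-- The quotient of the complex projective line `ℙ(ℂ²)` by the
relation identifying each line `L` with its orthogonal complement `Lᗮ` is
homeomorphic to the real projective plane (the projectivization of `ℝ³`). -/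
theorem stmt10 :
    Nonempty
      ((Quot fun P Q : Projectivization ℂ (EuclideanSpace ℂ (Fin 2)) =>
          P.submodule = Q.submodule ∨ Q.submodule = P.submoduleᗮ) ≃ₜ
        Projectivization ℝ (EuclideanSpace ℝ (Fin 3))) := by
  classical
  exact ⟨Continuous.homeoOfEquivCompactToT2
    (f := Equiv.ofBijective Stmt10Aux.hopfQ
      ⟨Stmt10Aux.hopfQ_injective, Stmt10Aux.hopfQ_surjective⟩)
    Stmt10Aux.hopfQ_continuous⟩
end

section
/- Equip ℂ² = EuclideanSpace ℂ (Fin 2) with its standard Hermitian inner product, and let τ ∈ U(2) be the unitary transformation interchanging the two standard basis vectors e₁ and e₂ (the matrix [[0,1],[1,0]]). For a one-dimensional ℂ-subspace L of ℂ², the unordered pair {L, Lᗮ} is invariant under τ (i.e., τ(L) = L or τ(L) = Lᗮ) if and only if L is one of the following: the span of e₁ + e₂, the span of e₁ − e₂, the span of e₁, the span of e₂, or the span of e₁ + (i r) e₂ for some nonzero real number r (where i is the imaginary unit). -/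
open Module Submodule

private lemma stmt11_gen (L : Submodule ℂ (EuclideanSpace ℂ (Fin 2)))
    (hL : Module.finrank ℂ L = 1) :
    ∃ v : EuclideanSpace ℂ (Fin 2), v ≠ 0 ∧ L = Submodule.span ℂ {v} := by
  obtain ⟨v, hv, hgen⟩ := finrank_eq_one_iff'.mp hL
  refine ⟨(v : EuclideanSpace ℂ (Fin 2)), by simpa using hv, le_antisymm ?_ ?_⟩
  · intro x hx
    obtain ⟨c, hc⟩ := hgen ⟨x, hx⟩
    rw [Submodule.mem_span_singleton]
    exact ⟨c, congrArg Subtype.val hc⟩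
  · rw [span_le, Set.singleton_subset_iff]; exact v.2

private lemma stmt11_span_smul (v w : EuclideanSpace ℂ (Fin 2)) (c : ℂ) (hc : c ≠ 0)
    (h : v = c • w) : Submodule.span ℂ {v} = Submodule.span ℂ {w} := by
  rw [h]; exact Submodule.span_singleton_smul_eq (IsUnit.mk0 c hc) w

private lemma stmt11_orth (v w : EuclideanSpace ℂ (Fin 2)) (hv : v ≠ 0) (hw : w ≠ 0)
    (h : (inner ℂ w v : ℂ) = 0) : Submodule.span ℂ {w} = (Submodule.span ℂ {v})ᗮ := by
  apply Submodule.eq_of_le_of_finrank_eq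
  · rw [span_le, Set.singleton_subset_iff]
    exact Submodule.mem_orthogonal_singleton_iff_inner_left.mpr h
  · rw [finrank_span_singleton hw]
    have h2 := Submodule.finrank_add_finrank_orthogonal (Submodule.span ℂ {v})
    rw [finrank_span_singleton hv, finrank_euclideanSpace] at h2
    simp at h2; omega

/-- Let `τ ∈ U(2)` be the unitary transformation with matrix
`[[0,1],[1,0]]` interchanging the standard basis vectors `e₁, e₂` of `ℂ²`. A
line `L ⊆ ℂ²` has `{L, Lᗮ}` invariant under `τ` (i.e. `τ(L) = L` or
`τ(L) = Lᗮ`) iff `L` is the span of `e₁ + e₂`, of `e₁ - e₂`, of `e₁`, of `e₂`,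
or of `e₁ + (i r)·e₂` for some nonzero real `r`. -/
theorem stmt11 (L : Submodule ℂ (EuclideanSpace ℂ (Fin 2)))
    (hL : Module.finrank ℂ L = 1) :
    let τ : EuclideanSpace ℂ (Fin 2) →ₗ[ℂ] EuclideanSpace ℂ (Fin 2) :=
      Matrix.toEuclideanLin !![(0 : ℂ), 1; 1, 0]
    let e₁ : EuclideanSpace ℂ (Fin 2) := EuclideanSpace.single 0 1
    let e₂ : EuclideanSpace ℂ (Fin 2) := EuclideanSpace.single 1 1
    (L.map τ = L ∨ L.map τ = Lᗮ) ↔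
      (L = Submodule.span ℂ {e₁ + e₂} ∨
       L = Submodule.span ℂ {e₁ - e₂} ∨
       L = Submodule.span ℂ {e₁} ∨
       L = Submodule.span ℂ {e₂} ∨
       ∃ r : ℝ, r ≠ 0 ∧ L = Submodule.span ℂ {e₁ + (Complex.I * r) • e₂}) := by
  intro τ e₁ e₂
  have htau0 : ∀ v : EuclideanSpace ℂ (Fin 2), (τ v) 0 = v 1 := by
    intro v
    simp [τ, Matrix.toEuclideanLin, Matrix.toLin'_apply, Matrix.mulVec, dotProduct,
      Fin.sum_univ_two]
  have htau1 : ∀ v : EuclideanSpace ℂ (Fin 2), (τ v) 1 = v 0 := by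
    intro v
    simp [τ, Matrix.toEuclideanLin, Matrix.toLin'_apply, Matrix.mulVec, dotProduct,
      Fin.sum_univ_two]
  have hvec : ∀ w : EuclideanSpace ℂ (Fin 2), w = w 0 • e₁ + w 1 • e₂ := by
    intro w; ext i; fin_cases i <;> simp [e₁, e₂, EuclideanSpace.single_apply]
  have hinner : ∀ x y : EuclideanSpace ℂ (Fin 2),
      (inner ℂ x y : ℂ) = starRingEnd ℂ (x 0) * y 0 + starRingEnd ℂ (x 1) * y 1 := by
    intro x y; simp [PiLp.inner_apply, Fin.sum_univ_two]; ring
  have hne : ∀ w : EuclideanSpace ℂ (Fin 2), (w 0 ≠ 0 ∨ w 1 ≠ 0) → w ≠ 0 := by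
    intro w hw h
    rcases hw with h0 | h0 <;> exact h0 (by rw [h]; rfl)
  obtain ⟨v, hv, rfl⟩ := stmt11_gen L hL
  have hmap : (Submodule.span ℂ {v}).map τ = Submodule.span ℂ {τ v} := by
    rw [Submodule.map_span, Set.image_singleton]
  constructor
  · rintro (h | h)
    · -- τ(L) = L : eigenvector case
      rw [hmap] at h
      have hmem : τ v ∈ Submodule.span ℂ {v} := h ▸ Submodule.mem_span_singleton_self (τ v)
      obtain ⟨c, hc⟩ := Submodule.mem_span_singleton.mp hmem
      have h0 : c * v 0 = v 1 := by
        have := congrFun (congrArg (fun w : EuclideanSpace ℂ (Fin 2) => (w : Fin 2 → ℂ)) hc) 0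
        simpa [htau0] using this
      have h1 : c * v 1 = v 0 := by
        have := congrFun (congrArg (fun w : EuclideanSpace ℂ (Fin 2) => (w : Fin 2 → ℂ)) hc) 1
        simpa [htau1] using this
      have hcsq : c ^ 2 = 1 := by
        by_cases ha : v 0 = 0
        · have hb : v 1 ≠ 0 := by
            intro hb; exact hv (by rw [hvec v, ha, hb]; simp)
          have h2 : c ^ 2 * v 1 = 1 * v 1 := by rw [pow_two, mul_assoc, h1, h0, one_mul]
          exact mul_right_cancel₀ hb h2
        · have h2 : c ^ 2 * v 0 = 1 * v 0 := by rw [pow_two, mul_assoc, h0, h1, one_mul]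
          exact mul_right_cancel₀ ha h2
      have hc1 : c = 1 ∨ c = -1 := by
        have h3 : (c - 1) * (c + 1) = 0 := by linear_combination hcsq
        rcases mul_eq_zero.mp h3 with h4 | h4
        · left; exact sub_eq_zero.mp h4
        · right; exact eq_neg_of_add_eq_zero_left h4
      rcases hc1 with rfl | rfl
      · -- c = 1 : v 0 = v 1
        have hab : v 0 = v 1 := by rw [← h0]; ring
        have ha : v 0 ≠ 0 := by
          intro ha; exact hv (by rw [hvec v, ha, ← hab, ha]; simp)
        left
        refine stmt11_span_smul _ _ (v 0) ha ?_
        ext i; fin_cases i <;> simp [e₁, e₂, EuclideanSpace.single_apply, hab]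
      · -- c = -1 : v 1 = -v 0
        have hab : v 1 = -v 0 := by rw [← h0]; ring
        have ha : v 0 ≠ 0 := by
          intro ha; exact hv (by rw [hvec v, ha, hab, ha]; simp)
        right; left
        refine stmt11_span_smul _ _ (v 0) ha ?_
        ext i; fin_cases i <;> simp [e₁, e₂, EuclideanSpace.single_apply, hab]
    · -- τ(L) = Lᗮ
      rw [hmap] at h
      have hmem : τ v ∈ (Submodule.span ℂ {v})ᗮ :=
        h ▸ Submodule.mem_span_singleton_self (τ v)
      have horth : (inner ℂ (τ v) v : ℂ) = 0 :=
        Submodule.mem_orthogonal_singleton_iff_inner_left.mp hmem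
      rw [hinner, htau0, htau1] at horth
      by_cases ha : v 0 = 0
      · -- L = span e₂
        have hb : v 1 ≠ 0 := by
          intro hb; exact hv (by rw [hvec v, ha, hb]; simp)
        right; right; right; left
        refine stmt11_span_smul _ _ (v 1) hb ?_
        ext i; fin_cases i <;> simp [e₁, e₂, EuclideanSpace.single_apply, ha]
      · set z : ℂ := v 1 / v 0 with hz
        have hzre : z + starRingEnd ℂ z = 0 := by
          have : starRingEnd ℂ (v 0) ≠ 0 := by simpa using ha
          rw [hz, map_div₀]
          field_simp
          linear_combination horth
        have hzI : z = Complex.I * (z.im : ℂ) := by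
          have hre : z.re = 0 := by
            have := congrArg Complex.re hzre
            simp [Complex.add_re, Complex.conj_re] at this
            linarith
          apply Complex.ext <;> simp [hre]
        by_cases hr : z.im = 0
        · -- v 1 = 0, L = span e₁
          have hb : v 1 = 0 := by
            have : z = 0 := by rw [hzI, hr]; simp
            rw [hz] at this; field_simp at this; simpa using this
          right; right; left
          refine stmt11_span_smul _ _ (v 0) ha ?_
          ext i; fin_cases i <;> simp [e₁, e₂, EuclideanSpace.single_apply, hb]
        · right; right; right; right
          have hb : v 1 = v 0 * (Complex.I * (z.im : ℂ)) := by
            rw [← hzI, hz]; field_simp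
          refine ⟨z.im, hr, stmt11_span_smul _ _ (v 0) ha ?_⟩
          ext i; fin_cases i <;> simp [e₁, e₂, EuclideanSpace.single_apply, hb]
  · have he1 : e₁ ≠ 0 := hne _ (Or.inl (by simp [e₁, EuclideanSpace.single_apply]))
    have he2 : e₂ ≠ 0 := hne _ (Or.inr (by simp [e₂, EuclideanSpace.single_apply]))
    rintro (h | h | h | h | ⟨r, hr, h⟩) <;> rw [h]
    · -- span (e₁+e₂) : fixed
      left
      rw [Submodule.map_span, Set.image_singleton]
      congr 1
      have : τ (e₁ + e₂) = e₁ + e₂ := by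
        ext i; fin_cases i <;>
          simp [htau0, htau1, e₁, e₂, EuclideanSpace.single_apply]
      rw [this]
    · left
      rw [Submodule.map_span, Set.image_singleton]
      have : τ (e₁ - e₂) = (-1 : ℂ) • (e₁ - e₂) := by
        ext i; fin_cases i <;>
          simp [htau0, htau1, e₁, e₂, EuclideanSpace.single_apply]
      rw [this]
      exact Submodule.span_singleton_smul_eq (IsUnit.mk0 (-1 : ℂ) (by norm_num)) _
    · right
      rw [Submodule.map_span, Set.image_singleton]
      have ht : τ e₁ = e₂ := by
        ext i; fin_cases i <;>
          simp [htau0, htau1, e₁, e₂, EuclideanSpace.single_apply]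
      rw [ht]
      exact stmt11_orth _ _ he1 he2
        (by rw [hinner]; simp [e₁, e₂, EuclideanSpace.single_apply])
    · right
      rw [Submodule.map_span, Set.image_singleton]
      have ht : τ e₂ = e₁ := by
        ext i; fin_cases i <;>
          simp [htau0, htau1, e₁, e₂, EuclideanSpace.single_apply]
      rw [ht]
      exact stmt11_orth _ _ he2 he1
        (by rw [hinner]; simp [e₁, e₂, EuclideanSpace.single_apply])
    · right
      rw [Submodule.map_span, Set.image_singleton]
      set w : EuclideanSpace ℂ (Fin 2) := e₁ + (Complex.I * r) • e₂ with hw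
      have hw0 : w 0 = 1 := by simp [hw, e₁, e₂, EuclideanSpace.single_apply]
      have hw1 : w 1 = Complex.I * r := by simp [hw, e₁, e₂, EuclideanSpace.single_apply]
      have hwne : w ≠ 0 := hne _ (Or.inl (by rw [hw0]; norm_num))
      have htwne : τ w ≠ 0 := hne _ (Or.inr (by rw [htau1, hw0]; norm_num))
      refine stmt11_orth _ _ hwne htwne ?_
      rw [hinner, htau0, htau1, hw0, hw1]
      simp [Complex.ext_iff]
end

section
/- Equip ℂ² = EuclideanSpace ℂ (Fin 2) with its standard Hermitian inner product, let ℙ(ℂ²) be the complex projective line with the quotient topology, and let Q = ℙ(ℂ²)/≈ be the quotient of ℙ(ℂ²) by the relation identifying each line L with its orthogonal complement Lᗮ. Let τ ∈ U(2) be the unitary matrix [[0,1],[1,0]]. The action of τ on lines commutes with taking orthogonal complements (since τ is unitary), so τ induces a continuous self-map of Q. Then the fixed-point set {q ∈ Q : τ·q = q}, with the subspace topology from Q, is homeomorphic to the disjoint union of a circle and a single point. -/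
noncomputable section Stmt12Aux

open Complex Submodule

namespace Stmt12

def vec (a b : ℂ) : EuclideanSpace ℂ (Fin 2) := WithLp.toLp 2 ![a, b]

@[simp] lemma vec_apply_zero (a b : ℂ) : vec a b 0 = a := rfl
@[simp] lemma vec_apply_one (a b : ℂ) : vec a b 1 = b := rfl

lemma vec_eq_zero_iff {a b : ℂ} : vec a b = 0 ↔ a = 0 ∧ b = 0 := by
  constructor
  · intro h
    constructor
    · rw [← vec_apply_zero a b, h]; rfl
    · rw [← vec_apply_one a b, h]; rfl
  · rintro ⟨rfl, rfl⟩
    ext i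
    fin_cases i <;> rfl

lemma vec_inj {a b a' b' : ℂ} : vec a b = vec a' b' ↔ a = a' ∧ b = b' := by
  constructor
  · intro h
    constructor
    · rw [← vec_apply_zero a b, h]; rfl
    · rw [← vec_apply_one a b, h]; rfl
  · rintro ⟨rfl, rfl⟩; rfl

lemma vec_eta (v : EuclideanSpace ℂ (Fin 2)) : vec (v 0) (v 1) = v := by
  ext i; fin_cases i <;> rfl

lemma smul_vec (c a b : ℂ) : c • vec a b = vec (c * a) (c * b) := by
  ext i; fin_cases i <;> rfl

lemma inner_vec (a b c d : ℂ) :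
    (inner ℂ (vec a b) (vec c d) : ℂ) = (starRingEnd ℂ) a * c + (starRingEnd ℂ) b * d := by
  simp [PiLp.inner_apply, Fin.sum_univ_two, RCLike.inner_apply]
  ring

/-- the orthogonal direction -/
def ortho (v : EuclideanSpace ℂ (Fin 2)) : EuclideanSpace ℂ (Fin 2) :=
  vec (-((starRingEnd ℂ) (v 1))) ((starRingEnd ℂ) (v 0))

lemma ortho_ne {v : EuclideanSpace ℂ (Fin 2)} (h : v ≠ 0) : ortho v ≠ 0 := by
  intro hc
  rw [ortho, vec_eq_zero_iff] at hc
  simp only [neg_eq_zero, map_eq_zero] at hc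
  apply h
  rw [← vec_eta v, vec_eq_zero_iff]
  exact ⟨hc.2, hc.1⟩

lemma span_ortho {v : EuclideanSpace ℂ (Fin 2)} (h : v ≠ 0) :
    (span ℂ {v})ᗮ = span ℂ {ortho v} := by
  have h' : ortho v ≠ 0 := ortho_ne h
  have hle : span ℂ {ortho v} ≤ (span ℂ {v})ᗮ := by
    rw [span_le, Set.singleton_subset_iff, SetLike.mem_coe,
      mem_orthogonal_singleton_iff_inner_right]
    rw [← vec_eta v, ortho]
    simp only [vec_apply_zero, vec_apply_one]
    rw [inner_vec]
    ring
  have f1 : Module.finrank ℂ (span ℂ {v}) = 1 := finrank_span_singleton h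
  have f2 : Module.finrank ℂ (span ℂ {ortho v}) = 1 := finrank_span_singleton h'
  have f3 : Module.finrank ℂ (span ℂ {v}) + Module.finrank ℂ (span ℂ {v})ᗮ =
      Module.finrank ℂ (EuclideanSpace ℂ (Fin 2)) :=
    Submodule.finrank_add_finrank_orthogonal _
  rw [finrank_euclideanSpace_fin, f1] at f3
  exact (Submodule.eq_of_le_of_finrank_eq hle (by omega)).symm


def nrm (v : EuclideanSpace ℂ (Fin 2)) : ℝ := normSq (v 0) + normSq (v 1)

def Xc (v : EuclideanSpace ℂ (Fin 2)) : ℝ := (normSq (v 0) - normSq (v 1)) / nrm v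

def Wc (v : EuclideanSpace ℂ (Fin 2)) : ℂ := (v 0 * (starRingEnd ℂ) (v 1)) / (nrm v : ℂ)

def Phi (v : EuclideanSpace ℂ (Fin 2)) : ℝ × ℂ × ℂ :=
  (Xc v ^ 2, (Xc v : ℂ) * Wc v, Wc v ^ 2)

lemma ne_zero_iff_coord {v : EuclideanSpace ℂ (Fin 2)} : v ≠ 0 ↔ (v 0 ≠ 0 ∨ v 1 ≠ 0) := by
  constructor
  · intro h
    by_contra hc
    push_neg at hc
    apply h
    rw [← vec_eta v, hc.1, hc.2]
    exact vec_eq_zero_iff.2 ⟨rfl, rfl⟩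
  · intro h hc
    rcases h with h | h <;> [exact h (by rw [hc]; rfl); exact h (by rw [hc]; rfl)]

lemma nrm_pos {v : EuclideanSpace ℂ (Fin 2)} (h : v ≠ 0) : 0 < nrm v := by
  rcases ne_zero_iff_coord.1 h with h0 | h0
  · have := normSq_pos.2 h0; have := normSq_nonneg (v 1); unfold nrm; linarith
  · have := normSq_pos.2 h0; have := normSq_nonneg (v 0); unfold nrm; linarith

lemma smul_coord (c : ℂ) (v : EuclideanSpace ℂ (Fin 2)) (i : Fin 2) : (c • v) i = c * v i := rfl

lemma nrm_smul (c : ℂ) (v : EuclideanSpace ℂ (Fin 2)) : nrm (c • v) = normSq c * nrm v := by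
  unfold nrm
  rw [smul_coord, smul_coord, normSq_mul, normSq_mul]
  ring

lemma Xc_smul {c : ℂ} (hc : c ≠ 0) (v : EuclideanSpace ℂ (Fin 2)) : Xc (c • v) = Xc v := by
  have hnc : normSq c ≠ 0 := by simpa [normSq_eq_zero] using hc
  unfold Xc
  rw [nrm_smul, smul_coord, smul_coord, normSq_mul, normSq_mul, ← mul_sub,
    mul_div_mul_left _ _ hnc]

lemma Wc_smul {c : ℂ} (hc : c ≠ 0) (v : EuclideanSpace ℂ (Fin 2)) : Wc (c • v) = Wc v := by
  have hnc : (normSq c : ℂ) ≠ 0 := by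
    simpa [Complex.ofReal_eq_zero, normSq_eq_zero] using hc
  unfold Wc
  rw [nrm_smul, smul_coord, smul_coord]
  push_cast
  rw [map_mul]
  rw [show c * v 0 * ((starRingEnd ℂ) c * (starRingEnd ℂ) (v 1))
      = (c * (starRingEnd ℂ) c) * (v 0 * (starRingEnd ℂ) (v 1)) by ring, mul_conj]
  rw [mul_div_mul_left _ _ hnc]

lemma Phi_smul {c : ℂ} (hc : c ≠ 0) (v : EuclideanSpace ℂ (Fin 2)) : Phi (c • v) = Phi v := by
  unfold Phi
  rw [Xc_smul hc, Wc_smul hc]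

lemma ortho_coord_zero (v : EuclideanSpace ℂ (Fin 2)) :
    ortho v 0 = -((starRingEnd ℂ) (v 1)) := rfl

lemma ortho_coord_one (v : EuclideanSpace ℂ (Fin 2)) :
    ortho v 1 = (starRingEnd ℂ) (v 0) := rfl

lemma nrm_ortho (v : EuclideanSpace ℂ (Fin 2)) : nrm (ortho v) = nrm v := by
  unfold nrm
  rw [ortho_coord_zero, ortho_coord_one, normSq_neg, normSq_conj, normSq_conj]
  ring

lemma Xc_ortho (v : EuclideanSpace ℂ (Fin 2)) : Xc (ortho v) = -Xc v := by
  unfold Xc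
  rw [nrm_ortho, ortho_coord_zero, ortho_coord_one, normSq_neg, normSq_conj, normSq_conj,
    ← neg_div]
  ring_nf

lemma Wc_ortho (v : EuclideanSpace ℂ (Fin 2)) : Wc (ortho v) = -Wc v := by
  unfold Wc
  rw [nrm_ortho, ortho_coord_zero, ortho_coord_one, Complex.conj_conj, ← neg_div]
  ring_nf

lemma Phi_ortho (v : EuclideanSpace ℂ (Fin 2)) : Phi (ortho v) = Phi v := by
  unfold Phi
  rw [Xc_ortho, Wc_ortho]
  push_cast
  refine Prod.ext (by ring) (Prod.ext (by ring) (by ring))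

lemma veronese_inj {x x' : ℝ} {w w' : ℂ} (h1 : x ^ 2 = x' ^ 2)
    (h2 : (x : ℂ) * w = (x' : ℂ) * w') (h3 : w ^ 2 = w' ^ 2) :
    (x = x' ∧ w = w') ∨ (x = -x' ∧ w = -w') := by
  have hx : x = x' ∨ x = -x' := sq_eq_sq_iff_eq_or_eq_neg.1 h1
  rcases eq_or_ne x' 0 with hx0 | hx0
  · have hxx : x = 0 := by rcases hx with h | h <;> simp [h, hx0]
    have hw : w = w' ∨ w = -w' := sq_eq_sq_iff_eq_or_eq_neg.1 h3
    rcases hw with h | h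
    · exact Or.inl ⟨by rw [hxx, hx0], h⟩
    · exact Or.inr ⟨by rw [hxx, hx0, neg_zero], h⟩
  · have hx0' : (x' : ℂ) ≠ 0 := by simpa using hx0
    rcases hx with h | h
    · left
      refine ⟨h, ?_⟩
      rw [h] at h2
      exact mul_left_cancel₀ hx0' h2
    · right
      refine ⟨h, ?_⟩
      rw [h] at h2
      push_cast at h2
      have : (x' : ℂ) * (-w) = (x' : ℂ) * w' := by rw [← h2]; ring
      have h4 := mul_left_cancel₀ hx0' this
      rw [← h4, neg_neg]

lemma span_eq_of_smul {v w : EuclideanSpace ℂ (Fin 2)} {c : ℂ} (hc : c ≠ 0)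
    (h : w = c • v) : span ℂ {v} = span ℂ {w} := by
  rw [h]
  exact (Submodule.span_singleton_group_smul_eq ℂ (Units.mk0 c hc) v).symm

lemma span_eq_of_det {v w : EuclideanSpace ℂ (Fin 2)} (hv : v ≠ 0) (hw : w ≠ 0)
    (h : v 0 * w 1 = v 1 * w 0) : span ℂ {v} = span ℂ {w} := by
  rcases eq_or_ne (v 0) 0 with h0 | h0
  · have hb : v 1 ≠ 0 := by
      rcases ne_zero_iff_coord.1 hv with h' | h'
      · exact absurd h0 h'
      · exact h'
    have hw0 : w 0 = 0 := by
      have : v 1 * w 0 = 0 := by rw [← h, h0, zero_mul]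
      exact (mul_eq_zero.1 this).resolve_left hb
    have hd : w 1 ≠ 0 := by
      rcases ne_zero_iff_coord.1 hw with h' | h'
      · exact absurd hw0 h'
      · exact h'
    refine span_eq_of_smul (c := w 1 / v 1) (div_ne_zero hd hb) ?_
    rw [← vec_eta w, ← vec_eta v, smul_vec, hw0, h0]
    simp only [vec_apply_zero, vec_apply_one]
    rw [div_mul_cancel₀ _ hb, mul_zero]
  · have hw1 : w 0 ≠ 0 := by
      intro hc
      have h1 : v 0 * w 1 = 0 := by rw [h, hc, mul_zero]
      have h2 : w 1 = 0 := (mul_eq_zero.1 h1).resolve_left h0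
      exact hw (by rw [← vec_eta w, hc, h2]; exact vec_eq_zero_iff.2 ⟨rfl, rfl⟩)
    refine span_eq_of_smul (c := w 0 / v 0) (div_ne_zero hw1 h0) ?_
    rw [← vec_eta w, ← vec_eta v, smul_vec]
    simp only [vec_apply_zero, vec_apply_one]
    rw [div_mul_cancel₀ _ h0]
    rw [vec_inj]
    refine ⟨rfl, ?_⟩
    field_simp
    linear_combination h

lemma span_eq_of_inv {v w : EuclideanSpace ℂ (Fin 2)} (hv : v ≠ 0) (hw : w ≠ 0)
    (hX : Xc v = Xc w) (hW : Wc v = Wc w) : span ℂ {v} = span ℂ {w} := by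
  have hn := nrm_pos hv
  have hm := nrm_pos hw
  have hnne : nrm v ≠ 0 := ne_of_gt hn
  have hmne : nrm w ≠ 0 := ne_of_gt hm
  have hnnec : (nrm v : ℂ) ≠ 0 := by exact_mod_cast hnne
  have hmnec : (nrm w : ℂ) ≠ 0 := by exact_mod_cast hmne
  have hX' : (normSq (v 0) - normSq (v 1)) * nrm w = (normSq (w 0) - normSq (w 1)) * nrm v :=
    (div_eq_div_iff hnne hmne).1 hX
  have e1 : (normSq (v 0) + normSq (v 1)) * nrm w = (normSq (w 0) + normSq (w 1)) * nrm v := by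
    rw [show normSq (v 0) + normSq (v 1) = nrm v from rfl,
      show normSq (w 0) + normSq (w 1) = nrm w from rfl]
    ring
  have h2 : normSq (v 0) * nrm w = normSq (w 0) * nrm v := by linarith
  have hW' : v 0 * (starRingEnd ℂ) (v 1) * (nrm w : ℂ)
      = w 0 * (starRingEnd ℂ) (w 1) * (nrm v : ℂ) := by
    have := (div_eq_div_iff hnnec hmnec).1 hW
    exact this
  have h2c : (starRingEnd ℂ) (v 0) * v 0 * (nrm w : ℂ)
      = (starRingEnd ℂ) (w 0) * w 0 * (nrm v : ℂ) := by
    rw [← Complex.normSq_eq_conj_mul_self, ← Complex.normSq_eq_conj_mul_self]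
    exact_mod_cast congrArg (fun r : ℝ => (r : ℂ)) h2
  have hdet : v 0 * w 1 = v 1 * w 0 := by
    rcases eq_or_ne (v 0) 0 with h0 | h0
    · have hA : normSq (v 0) = 0 := by rw [h0]; simp
      have hC : normSq (w 0) = 0 := by
        have : normSq (w 0) * nrm v = 0 := by rw [← h2, hA, zero_mul]
        exact (mul_eq_zero.1 this).resolve_right hnne
      have hw0 : w 0 = 0 := normSq_eq_zero.1 hC
      rw [h0, hw0, zero_mul, mul_zero]
    · have hC : normSq (w 0) ≠ 0 := by
        intro hc
        have : normSq (v 0) * nrm w = 0 := by rw [h2, hc, zero_mul]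
        exact (normSq_pos.2 h0).ne' ((mul_eq_zero.1 this).resolve_right hmne)
      have hw0 : w 0 ≠ 0 := fun hc => hC (by rw [hc]; simp)
      have E : ((starRingEnd ℂ) (v 0) * (starRingEnd ℂ) (w 1)) * (w 0 * (nrm v : ℂ))
          = ((starRingEnd ℂ) (w 0) * (starRingEnd ℂ) (v 1)) * (w 0 * (nrm v : ℂ)) := by
        linear_combination (starRingEnd ℂ) (v 1) * h2c - (starRingEnd ℂ) (v 0) * hW'
      have E' := mul_right_cancel₀ (mul_ne_zero hw0 hnnec) E
      have := congrArg (starRingEnd ℂ) E'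
      simp only [map_mul, Complex.conj_conj] at this
      rw [this]
      ring
  exact span_eq_of_det hv hw hdet

lemma phi_inj {v w : EuclideanSpace ℂ (Fin 2)} (hv : v ≠ 0) (hw : w ≠ 0)
    (h : Phi v = Phi w) :
    span ℂ {v} = span ℂ {w} ∨ span ℂ {w} = (span ℂ {v})ᗮ := by
  have h1 : Xc v ^ 2 = Xc w ^ 2 := congrArg Prod.fst h
  have h2 : (Xc v : ℂ) * Wc v = (Xc w : ℂ) * Wc w := congrArg (fun p => p.2.1) h
  have h3 : Wc v ^ 2 = Wc w ^ 2 := congrArg (fun p => p.2.2) h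
  rcases veronese_inj h1 h2 h3 with ⟨hx, hw'⟩ | ⟨hx, hw'⟩
  · exact Or.inl (span_eq_of_inv hv hw hx hw')
  · right
    rw [span_ortho hv]
    refine (span_eq_of_inv (ortho_ne hv) hw ?_ ?_).symm
    · rw [Xc_ortho, hx, neg_neg]
    · rw [Wc_ortho, hw', neg_neg]

def Gv (θ : ℝ) : EuclideanSpace ℂ (Fin 2) := vec (Real.cos θ) (Real.sin θ * I)

lemma Gv_ne (θ : ℝ) : Gv θ ≠ 0 := by
  rw [Gv]
  intro h
  rw [vec_eq_zero_iff] at h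
  have hc : Real.cos θ = 0 := by exact_mod_cast h.1
  have hs : Real.sin θ = 0 := by
    rcases mul_eq_zero.1 h.2 with h' | h'
    · exact_mod_cast h'
    · exact absurd h' Complex.I_ne_zero
  have := Real.sin_sq_add_cos_sq θ
  rw [hc, hs] at this
  norm_num at this

lemma ortho_Gv (θ : ℝ) : ortho (Gv θ) = (-I) • Gv (θ + Real.pi / 2) := by
  rw [Gv, Gv, ortho, smul_vec]
  simp only [vec_apply_zero, vec_apply_one, map_mul, Complex.conj_ofReal, Complex.conj_I,
    Real.cos_add_pi_div_two, Real.sin_add_pi_div_two]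
  rw [vec_inj]
  constructor
  · push_cast
    ring
  · push_cast
    linear_combination Complex.cos (θ : ℂ) * Complex.I_sq

lemma span_Gv_ortho (θ : ℝ) :
    (span ℂ {Gv θ})ᗮ = span ℂ {Gv (θ + Real.pi / 2)} := by
  rw [span_ortho (Gv_ne θ), ortho_Gv]
  exact Submodule.span_singleton_group_smul_eq ℂ (Units.mk0 (-I) (by simp)) _

lemma angle_eq_of_cos_sin {α β : ℝ} (hc : Real.cos β = Real.cos α)
    (hs : Real.sin β = Real.sin α) : ∃ n : ℤ, β = α + n * (2 * Real.pi) := by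
  have h : Complex.exp (β * I) = Complex.exp (α * I) := by
    rw [Complex.exp_mul_I, Complex.exp_mul_I, ← Complex.ofReal_cos, ← Complex.ofReal_sin,
      ← Complex.ofReal_cos α, ← Complex.ofReal_sin α, hc, hs]
  obtain ⟨n, hn⟩ := Complex.exp_eq_exp_iff_exists_int.1 h
  refine ⟨n, ?_⟩
  have h1 : (β : ℂ) * I = ((α + n * (2 * Real.pi) : ℝ) : ℂ) * I := by
    push_cast
    linear_combination hn
  have h2 := mul_right_cancel₀ Complex.I_ne_zero h1
  exact_mod_cast h2

lemma cos_sq_add_sin_sq_complex (x : ℝ) :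
    (Real.cos x : ℂ) ^ 2 + (Real.sin x : ℂ) ^ 2 = 1 := by
  rw [← Complex.ofReal_pow, ← Complex.ofReal_pow, ← Complex.ofReal_add]
  norm_cast
  rw [add_comm]
  exact Real.sin_sq_add_cos_sq x

lemma angle_of_span_eq {α β : ℝ} (h : span ℂ {Gv α} = span ℂ {Gv β}) :
    ∃ k : ℤ, β = α + k * Real.pi := by
  obtain ⟨z, hz⟩ := Submodule.span_singleton_eq_span_singleton.1 h
  rw [Units.smul_def] at hz
  have h0 : (z : ℂ) * Real.cos α = Real.cos β := by
    have := congrArg (fun v : EuclideanSpace ℂ (Fin 2) => v 0) hz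
    simpa [Gv, smul_coord] using this
  have h1 : (z : ℂ) * Real.sin α = Real.sin β := by
    have h' := congrArg (fun v : EuclideanSpace ℂ (Fin 2) => v 1) hz
    simp only [Gv, smul_coord, vec_apply_one] at h'
    have h'' : ((z : ℂ) * Real.sin α) * I = (Real.sin β : ℂ) * I := by linear_combination h'
    exact mul_right_cancel₀ Complex.I_ne_zero h''
  have hz2 : (z : ℂ) ^ 2 = 1 := by
    have hb := cos_sq_add_sin_sq_complex β
    rw [← h0, ← h1] at hb
    have ha := cos_sq_add_sin_sq_complex α
    calc (z : ℂ) ^ 2 = (z : ℂ) ^ 2 * ((Real.cos α : ℂ) ^ 2 + (Real.sin α : ℂ) ^ 2) := by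
          rw [ha]; ring
    _ = 1 := by linear_combination hb
  have hz1 : (z : ℂ) = 1 ∨ (z : ℂ) = -1 := by
    have hfac : ((z : ℂ) - 1) * ((z : ℂ) + 1) = 0 := by linear_combination hz2
    rcases mul_eq_zero.1 hfac with h' | h'
    · left; linear_combination h'
    · right; linear_combination h'
  rcases hz1 with hz1 | hz1
  · have hc : Real.cos β = Real.cos α := by
      have : (Real.cos β : ℂ) = Real.cos α := by rw [← h0, hz1, one_mul]
      exact_mod_cast this
    have hs : Real.sin β = Real.sin α := by
      have : (Real.sin β : ℂ) = Real.sin α := by rw [← h1, hz1, one_mul]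
      exact_mod_cast this
    obtain ⟨n, hn⟩ := angle_eq_of_cos_sin hc hs
    exact ⟨2 * n, by rw [hn]; push_cast; ring⟩
  · have hc : Real.cos β = Real.cos (α + Real.pi) := by
      rw [Real.cos_add_pi]
      have : (Real.cos β : ℂ) = -Real.cos α := by rw [← h0, hz1]; ring
      exact_mod_cast this
    have hs : Real.sin β = Real.sin (α + Real.pi) := by
      rw [Real.sin_add_pi]
      have : (Real.sin β : ℂ) = -Real.sin α := by rw [← h1, hz1]; ring
      exact_mod_cast this
    obtain ⟨n, hn⟩ := angle_eq_of_cos_sin hc hs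
    exact ⟨2 * n + 1, by rw [hn]; push_cast; ring⟩

lemma span_Gv_ne_pt (α : ℝ) : span ℂ {Gv α} ≠ span ℂ {vec 1 1} := by
  intro h
  obtain ⟨z, hz⟩ := Submodule.span_singleton_eq_span_singleton.1 h
  rw [Units.smul_def] at hz
  have h0 : (z : ℂ) * Real.cos α = 1 := by
    have := congrArg (fun v : EuclideanSpace ℂ (Fin 2) => v 0) hz
    simpa [Gv, smul_coord] using this
  have h1 : (z : ℂ) * (Real.sin α * I) = 1 := by
    have := congrArg (fun v : EuclideanSpace ℂ (Fin 2) => v 1) hz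
    simpa [Gv, smul_coord] using this
  have hz0 : (z : ℂ) ≠ 0 := z.ne_zero
  have hcs : (Real.cos α : ℂ) = Real.sin α * I :=
    mul_left_cancel₀ hz0 (by rw [h0, h1])
  have hsq : (Real.cos α : ℂ) ^ 2 + (Real.sin α : ℂ) ^ 2 = (Real.sin α : ℂ) ^ 2 * (I ^ 2 + 1) := by
    rw [hcs]; ring
  rw [Complex.I_sq, cos_sq_add_sin_sq_complex] at hsq
  norm_num at hsq

lemma Gv_add_pi (θ : ℝ) : Gv (θ + Real.pi) = (-1 : ℂ) • Gv θ := by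
  rw [Gv, Gv, smul_vec, vec_inj, Real.cos_add_pi, Real.sin_add_pi]
  constructor <;> push_cast <;> ring

lemma span_Gv_add_pi (θ : ℝ) : span ℂ {Gv (θ + Real.pi)} = span ℂ {Gv θ} := by
  exact (span_eq_of_smul (by norm_num : (-1 : ℂ) ≠ 0) (Gv_add_pi θ)).symm

lemma span_ortho_ortho {v : EuclideanSpace ℂ (Fin 2)} (h : v ≠ 0) :
    (span ℂ {ortho v})ᗮ = span ℂ {v} := by
  rw [← span_ortho h]
  haveI : CompleteSpace (span ℂ {v}) := FiniteDimensional.complete ℂ _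
  exact Submodule.orthogonal_orthogonal (span ℂ {v})

lemma ortho_Gv_eq (θ : ℝ) : ortho (Gv θ) = vec (Real.sin θ * I) (Real.cos θ) := by
  rw [Gv, ortho]
  simp only [vec_apply_zero, vec_apply_one, map_mul, Complex.conj_ofReal, Complex.conj_I]
  rw [vec_inj]
  constructor <;> ring

end Stmt12

open Complex Submodule Stmt12

/-- Let `Q` be the quotient of `ℙ(ℂ²)` identifying each line with
its orthogonal complement, and let `τ` be the unitary map `[[0,1],[1,0]]`. The
self-map of `Q` induced by `τ` has fixed-point set homeomorphic to the disjoint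
union of a circle and a single point. -/
theorem stmt12
    (τ : EuclideanSpace ℂ (Fin 2) →ₗ[ℂ] EuclideanSpace ℂ (Fin 2))
    (hτ : τ = Matrix.toEuclideanLin !![(0 : ℂ), 1; 1, 0])
    (hinj : Function.Injective τ)
    (rel : Projectivization ℂ (EuclideanSpace ℂ (Fin 2)) →
           Projectivization ℂ (EuclideanSpace ℂ (Fin 2)) → Prop)
    (hrel : ∀ P Q, rel P Q ↔ (P.submodule = Q.submodule ∨ Q.submodule = P.submoduleᗮ))
    (f : Quot rel → Quot rel) (hfcont : Continuous f)
    (hf : ∀ x : Projectivization ℂ (EuclideanSpace ℂ (Fin 2)),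
      f (Quot.mk rel x) = Quot.mk rel (Projectivization.map τ hinj x)) :
    Nonempty (({q : Quot rel // f q = q}) ≃ₜ (Circle ⊕ PUnit)) := by
  classical
  -- rel is an equivalence relation
  have horth2 : ∀ P : Projectivization ℂ (EuclideanSpace ℂ (Fin 2)),
      P.submoduleᗮᗮ = P.submodule := by
    intro P
    induction P using Projectivization.ind with
    | h v hv =>
      rw [Projectivization.submodule_mk, span_ortho hv, span_ortho_ortho hv]
  have hequiv : Equivalence rel := by
    refine ⟨fun P => (hrel P P).2 (Or.inl rfl), ?_, ?_⟩
    · intro P Q h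
      rw [hrel] at h ⊢
      rcases h with h | h
      · exact Or.inl h.symm
      · right
        rw [h, horth2]
    · intro P Q R h1 h2
      rw [hrel] at h1 h2 ⊢
      rcases h1 with h1 | h1 <;> rcases h2 with h2 | h2
      · exact Or.inl (h1.trans h2)
      · right; rw [h2, h1]
      · right; rw [← h2, h1]
      · left; rw [h2, h1, horth2]
  have quot_eq : ∀ x y, Quot.mk rel x = Quot.mk rel y ↔ rel x y :=
    fun x y => ⟨fun h => hequiv.eqvGen_iff.1 (Quot.eqvGen_exact h), fun h => Quot.sound h⟩
  have mkQ_eq : ∀ (v w : EuclideanSpace ℂ (Fin 2)) (hv : v ≠ 0) (hw : w ≠ 0),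
      Quot.mk rel (Projectivization.mk ℂ v hv) = Quot.mk rel (Projectivization.mk ℂ w hw) ↔
        (span ℂ {v} = span ℂ {w} ∨ span ℂ {w} = (span ℂ {v})ᗮ) := by
    intro v w hv hw
    rw [quot_eq, hrel, Projectivization.submodule_mk, Projectivization.submodule_mk]
  -- τ acts by swapping coordinates
  have tau_apply : ∀ v : EuclideanSpace ℂ (Fin 2), τ v = vec (v 1) (v 0) := by
    intro v
    rw [hτ, Matrix.toEuclideanLin_apply]
    ext i
    fin_cases i <;>
      simp [vec, Matrix.mulVec, dotProduct, Fin.sum_univ_two, Matrix.vecHead,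
        Matrix.vecTail, Function.comp]
  -- the invariant map to a Hausdorff space
  have orbit_inv : ∀ a b : {v : EuclideanSpace ℂ (Fin 2) // v ≠ 0},
      (projectivizationSetoid ℂ (EuclideanSpace ℂ (Fin 2))) a b →
        Phi a.val = Phi b.val := by
    intro a b hab
    obtain ⟨c, hc⟩ := hab
    have : (c : ℂ) • (b : EuclideanSpace ℂ (Fin 2)) = a := by
      rw [← hc]; rfl
    rw [← this, Phi_smul c.ne_zero]
  have PhiP_def : ∀ P : Projectivization ℂ (EuclideanSpace ℂ (Fin 2)), True := fun _ => trivial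
  let PhiP : Projectivization ℂ (EuclideanSpace ℂ (Fin 2)) → ℝ × ℂ × ℂ :=
    fun P => Quotient.liftOn' P (fun v => Phi v.val) orbit_inv
  have PhiP_mk : ∀ (v : EuclideanSpace ℂ (Fin 2)) (hv : v ≠ 0),
      PhiP (Projectivization.mk ℂ v hv) = Phi v := fun v hv => rfl
  have PhiP_inv : ∀ P Q, rel P Q → PhiP P = PhiP Q := by
    intro P Q h
    induction P using Projectivization.ind with
    | h v hv =>
    induction Q using Projectivization.ind with
    | h w hw =>
      rw [hrel, Projectivization.submodule_mk, Projectivization.submodule_mk] at h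
      rw [PhiP_mk, PhiP_mk]
      rcases h with h | h
      · obtain ⟨z, hz⟩ := Submodule.span_singleton_eq_span_singleton.1 h
        rw [Units.smul_def] at hz
        rw [← hz, Phi_smul z.ne_zero]
      · rw [span_ortho hv] at h
        obtain ⟨z, hz⟩ := Submodule.span_singleton_eq_span_singleton.1 h
        rw [Units.smul_def] at hz
        have hE : Phi (ortho v) = Phi w := by rw [← hz, Phi_smul z.ne_zero]
        rw [← Phi_ortho v]
        exact hE
  let PhiQ : Quot rel → ℝ × ℂ × ℂ := Quot.lift PhiP PhiP_inv
  have PhiQ_cont : Continuous PhiQ := by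
    apply continuous_quot_lift
    apply Continuous.quotient_liftOn'
    have hcoord : ∀ i : Fin 2, Continuous
        (fun v : {v : EuclideanSpace ℂ (Fin 2) // v ≠ 0} => (v : EuclideanSpace ℂ (Fin 2)) i) :=
      fun i => (EuclideanSpace.proj (𝕜 := ℂ) i).continuous.comp continuous_subtype_val
    have hnrm : Continuous
        (fun v : {v : EuclideanSpace ℂ (Fin 2) // v ≠ 0} => nrm (v : EuclideanSpace ℂ (Fin 2))) :=
      (Complex.continuous_normSq.comp (hcoord 0)).add (Complex.continuous_normSq.comp (hcoord 1))
    have hnrm_ne : ∀ v : {v : EuclideanSpace ℂ (Fin 2) // v ≠ 0},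
        nrm (v : EuclideanSpace ℂ (Fin 2)) ≠ 0 := fun v => (nrm_pos v.2).ne'
    have hX : Continuous
        (fun v : {v : EuclideanSpace ℂ (Fin 2) // v ≠ 0} => Xc (v : EuclideanSpace ℂ (Fin 2))) :=
      Continuous.div ((Complex.continuous_normSq.comp (hcoord 0)).sub
        (Complex.continuous_normSq.comp (hcoord 1))) hnrm hnrm_ne
    have hW : Continuous
        (fun v : {v : EuclideanSpace ℂ (Fin 2) // v ≠ 0} => Wc (v : EuclideanSpace ℂ (Fin 2))) :=
      Continuous.div ((hcoord 0).mul (Complex.continuous_conj.comp (hcoord 1)))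
        (Complex.continuous_ofReal.comp hnrm)
        (fun v => by exact_mod_cast hnrm_ne v)
    exact ((hX.pow 2).prodMk
      (((Complex.continuous_ofReal.comp hX).mul hW).prodMk (hW.pow 2)))
  have PhiQ_inj : Function.Injective PhiQ := by
    intro x y
    obtain ⟨P, rfl⟩ := Quot.exists_rep x
    obtain ⟨Q, rfl⟩ := Quot.exists_rep y
    induction P using Projectivization.ind with
    | h v hv =>
    induction Q using Projectivization.ind with
    | h w hw =>
      intro h
      have h' : Phi v = Phi w := h
      rw [quot_eq, hrel, Projectivization.submodule_mk, Projectivization.submodule_mk]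
      exact phi_inj hv hw h'
  haveI hT2 : T2Space (Quot rel) := T2Space.of_injective_continuous PhiQ_inj PhiQ_cont
  -- the circle family
  set G : ℝ → Quot rel :=
    fun θ => Quot.mk rel (Projectivization.mk ℂ (Gv θ) (Gv_ne θ)) with hGdef
  have hGcont : Continuous G := by
    have hGv : Continuous Gv := by
      have : Continuous (fun θ : ℝ => (![(Real.cos θ : ℂ), Real.sin θ * I] : Fin 2 → ℂ)) := by
        apply continuous_pi
        intro i
        fin_cases i
        · simpa [Function.comp_def] using Complex.continuous_cos.comp Complex.continuous_ofReal
        · show Continuous fun a : ℝ => (Real.sin a : ℂ) * I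
          fun_prop
      exact (PiLp.continuous_toLp 2 (fun _ : Fin 2 => ℂ)).comp this
    exact continuous_quot_mk.comp (continuous_quotient_mk'.comp (hGv.subtype_mk _))
  have hGper : Function.Periodic G (Real.pi / 2) := by
    intro θ
    rw [hGdef]
    apply Quot.sound
    rw [hrel, Projectivization.submodule_mk, Projectivization.submodule_mk]
    right
    rw [span_Gv_ortho]
    have h4 : θ + Real.pi / 2 + Real.pi / 2 = θ + Real.pi := by ring
    rw [h4, span_Gv_add_pi]
  -- point and fixed point facts
  have h11 : vec 1 1 ≠ 0 := by rw [Ne, vec_eq_zero_iff]; norm_num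
  set pt : Quot rel := Quot.mk rel (Projectivization.mk ℂ (vec 1 1) h11) with hptdef
  have hfixpt : f pt = pt := by
    rw [hptdef, hf, Projectivization.map_mk]
    rw [mkQ_eq]
    left
    rw [tau_apply]
    rfl
  have hfixG : ∀ θ, f (G θ) = G θ := by
    intro θ
    rw [hGdef, hf, Projectivization.map_mk, mkQ_eq]
    right
    have hτG : τ (Gv θ) = ortho (Gv θ) := by
      rw [tau_apply, ortho_Gv_eq]
      simp only [Gv, vec_apply_zero, vec_apply_one]
    rw [hτG, span_ortho_ortho (Gv_ne θ)]
  -- the AddCircle parametrization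
  have h2pi : (2 * Real.pi) ≠ 0 := by positivity
  have hACwd : ∀ a b : ℝ, (QuotientAddGroup.leftRel (AddSubgroup.zmultiples (2 * Real.pi))) a b →
      G (a / 4) = G (b / 4) := by
    intro a b hab
    rw [QuotientAddGroup.leftRel_apply] at hab
    obtain ⟨k, hk⟩ := AddSubgroup.mem_zmultiples_iff.1 hab
    have hb : b / 4 = a / 4 + k • (Real.pi / 2) := by
      rw [zsmul_eq_mul] at hk ⊢
      have : b = a + k * (2 * Real.pi) := by linarith
      rw [this]; ring
    rw [hb, (hGper.zsmul k) (a / 4)]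
  let ACmap : AddCircle (2 * Real.pi) → Quot rel :=
    fun x => Quotient.liftOn' x (fun θ => G (θ / 4)) hACwd
  have hACmk : ∀ θ : ℝ, ACmap (θ : AddCircle (2 * Real.pi)) = G (θ / 4) := fun θ => rfl
  have hACcont : Continuous ACmap :=
    Continuous.quotient_liftOn' (hGcont.comp (continuous_id.div_const 4)) hACwd
  have hACfix : ∀ x, f (ACmap x) = ACmap x := by
    intro x
    induction x using QuotientAddGroup.induction_on with
    | H θ => rw [hACmk]; exact hfixG _
  -- injectivity facts
  have key : ∀ α β : ℝ, G α = G β → ∃ k : ℤ, β = α + k * (Real.pi / 2) := by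
    intro α β h
    rw [hGdef] at h
    simp only [mkQ_eq] at h
    rcases h with h | h
    · obtain ⟨k, hk⟩ := angle_of_span_eq h
      exact ⟨2 * k, by rw [hk]; push_cast; ring⟩
    · rw [span_Gv_ortho] at h
      obtain ⟨k, hk⟩ := angle_of_span_eq h
      exact ⟨1 - 2 * k, by push_cast; linarith⟩
  have hACinj : Function.Injective ACmap := by
    intro x y
    induction x using QuotientAddGroup.induction_on with
    | H θ =>
    induction y using QuotientAddGroup.induction_on with
    | H θ' =>
      intro h
      rw [hACmk, hACmk] at h
      obtain ⟨k, hk⟩ := key _ _ h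
      rw [QuotientAddGroup.eq]
      rw [AddSubgroup.mem_zmultiples_iff]
      refine ⟨k, ?_⟩
      rw [zsmul_eq_mul]
      have : θ' = θ + k * (2 * Real.pi) := by
        have h4 : θ' / 4 = θ / 4 + k * (Real.pi / 2) := hk
        linarith
      rw [this]; ring
  have hACpt : ∀ x, ACmap x ≠ pt := by
    intro x
    induction x using QuotientAddGroup.induction_on with
    | H θ =>
      rw [hACmk]
      intro hc
      have hc' : Quot.mk rel (Projectivization.mk ℂ (Gv (θ / 4)) (Gv_ne _))
          = Quot.mk rel (Projectivization.mk ℂ (vec 1 1) h11) := hc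
      rw [mkQ_eq] at hc'
      rcases hc' with hc' | hc'
      · exact span_Gv_ne_pt _ hc'
      · rw [span_Gv_ortho] at hc'
        exact span_Gv_ne_pt _ hc'.symm
  -- surjectivity
  have hsurj : ∀ (q : Quot rel), f q = q →
      (∃ θ : ℝ, q = G θ) ∨ q = pt := by
    intro q hq
    obtain ⟨x, rfl⟩ := Quot.exists_rep q
    induction x using Projectivization.ind with
    | h v hv =>
      rw [hf, Projectivization.map_mk, mkQ_eq, tau_apply] at hq
      rcases hq with h1 | h2
      · -- eigenvector case
        right
        obtain ⟨z, hz⟩ := Submodule.span_singleton_eq_span_singleton.1 h1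
        rw [Units.smul_def] at hz
        have h0 : (z : ℂ) * v 1 = v 0 := by
          simpa [smul_coord] using congrArg (fun u : EuclideanSpace ℂ (Fin 2) => u 0) hz
        have h1' : (z : ℂ) * v 0 = v 1 := by
          simpa [smul_coord] using congrArg (fun u : EuclideanSpace ℂ (Fin 2) => u 1) hz
        have ha : v 0 ≠ 0 := by
          intro hc
          apply hv
          rw [← vec_eta v, hc, ← h1', hc, mul_zero]
          exact vec_eq_zero_iff.2 ⟨rfl, rfl⟩
        have hzsq : ((z : ℂ) - 1) * ((z : ℂ) + 1) * v 0 = 0 := by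
          linear_combination (z : ℂ) * h1' + h0
        have hz1 : (z : ℂ) = 1 ∨ (z : ℂ) = -1 := by
          rcases mul_eq_zero.1 hzsq with h | h
          · rcases mul_eq_zero.1 h with h | h
            · left; linear_combination h
            · right; linear_combination h
          · exact absurd h ha
        rw [hptdef, mkQ_eq]
        rcases hz1 with hz1 | hz1
        · left
          have hba : v 1 = v 0 := by rw [← h1', hz1, one_mul]
          refine span_eq_of_det hv h11 ?_
          rw [vec_apply_zero, vec_apply_one, hba]
        · right
          rw [span_ortho hv]
          have hba : v 1 = -v 0 := by rw [← h1', hz1]; ring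
          refine span_eq_of_det h11 (ortho_ne hv) ?_
          rw [vec_apply_zero, vec_apply_one, ortho_coord_zero, ortho_coord_one, hba]
          simp
      · -- circle case
        left
        have hsw : vec (v 1) (v 0) ≠ 0 := by
          intro hc
          rw [vec_eq_zero_iff] at hc
          apply hv
          rw [← vec_eta v, hc.1, hc.2]
          exact vec_eq_zero_iff.2 ⟨rfl, rfl⟩
        rw [span_ortho hsw] at h2
        have how : ortho (vec (v 1) (v 0))
            = vec (-((starRingEnd ℂ) (v 0))) ((starRingEnd ℂ) (v 1)) := rfl
        rw [how] at h2
        obtain ⟨z, hz⟩ := Submodule.span_singleton_eq_span_singleton.1 h2.symm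
        rw [Units.smul_def] at hz
        have ha : (z : ℂ) * (-((starRingEnd ℂ) (v 0))) = v 0 := by
          simpa [smul_coord] using congrArg (fun u : EuclideanSpace ℂ (Fin 2) => u 0) hz
        have hb : (z : ℂ) * (starRingEnd ℂ) (v 1) = v 1 := by
          simpa [smul_coord] using congrArg (fun u : EuclideanSpace ℂ (Fin 2) => u 1) hz
        -- |z| = 1
        have hnsq : normSq (z : ℂ) = 1 := by
          rcases ne_zero_iff_coord.1 hv with hA | hB
          · have hcg := congrArg normSq ha
            rw [normSq_mul, normSq_neg, normSq_conj] at hcg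
            have hna : normSq (v 0) ≠ 0 := (normSq_pos.2 hA).ne'
            exact mul_right_cancel₀ hna (by rw [hcg]; ring)
          · have hcg := congrArg normSq hb
            rw [normSq_mul, normSq_conj] at hcg
            have hnb : normSq (v 1) ≠ 0 := (normSq_pos.2 hB).ne'
            exact mul_right_cancel₀ hnb (by rw [hcg]; ring)
        have habs : ‖(z : ℂ)‖ = 1 := by
          have hsq : ‖(z : ℂ)‖ ^ 2 = 1 := by rw [Complex.sq_norm, hnsq]
          have hnn : 0 ≤ ‖(z : ℂ)‖ := norm_nonneg _
          have hfac : (‖(z : ℂ)‖ - 1) * (‖(z : ℂ)‖ + 1) = 0 := by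
            linear_combination hsq
          rcases mul_eq_zero.1 hfac with h | h
          · linarith
          · linarith
        have hzexp : Complex.exp ((Complex.arg (z : ℂ) : ℝ) * I) = (z : ℂ) := by
          have hh := Complex.norm_mul_exp_arg_mul_I (z : ℂ)
          rw [habs] at hh
          simpa using hh
        set μ : ℂ := Complex.exp ((((Complex.arg (z : ℂ) + Real.pi) / 2 : ℝ) : ℂ) * I) with hμdef
        have hμne : μ ≠ 0 := Complex.exp_ne_zero _
        have hμ2 : μ ^ 2 = -(z : ℂ) := by
          rw [hμdef, sq, ← Complex.exp_add]
          have harr : (((Complex.arg (z : ℂ) + Real.pi) / 2 : ℝ) : ℂ) * I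
              + (((Complex.arg (z : ℂ) + Real.pi) / 2 : ℝ) : ℂ) * I
              = ((Complex.arg (z : ℂ) : ℝ) : ℂ) * I + ((Real.pi : ℝ) : ℂ) * I := by
            push_cast
            ring
          rw [harr, Complex.exp_add, Complex.exp_pi_mul_I, hzexp]
          ring
        have hμconj : μ * (starRingEnd ℂ) μ = 1 := by
          rw [Complex.mul_conj]
          have : normSq μ = 1 := by
            rw [Complex.normSq_eq_norm_sq, hμdef, Complex.norm_exp_ofReal_mul_I]
            norm_num
          rw [this]
          norm_num
        have hμz : -(z : ℂ) * (starRingEnd ℂ) μ = μ := by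
          linear_combination (-(starRingEnd ℂ) μ) * hμ2 + μ * hμconj
        have hcμne : (starRingEnd ℂ) μ ≠ 0 := by
          intro hc
          apply hμne
          have := congrArg (starRingEnd ℂ) hc
          simpa using this
        have hIμne : I * μ ≠ 0 := mul_ne_zero Complex.I_ne_zero hμne
        have hpc : (starRingEnd ℂ) (v 0 / μ) = v 0 / μ := by
          rw [map_div₀, div_eq_div_iff hcμne hμne]
          linear_combination ((starRingEnd ℂ) μ) * ha + (-(starRingEnd ℂ) (v 0)) * hμz
        have hqc : (starRingEnd ℂ) (v 1 / (I * μ)) = v 1 / (I * μ) := by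
          rw [map_div₀, map_mul, Complex.conj_I, div_eq_div_iff
            (mul_ne_zero (neg_ne_zero.2 Complex.I_ne_zero) hcμne) hIμne]
          linear_combination (-(I * (starRingEnd ℂ) μ)) * hb
            + (-((starRingEnd ℂ) (v 1)) * I) * hμz
        have hpre : (((v 0 / μ).re : ℝ) : ℂ) = v 0 / μ := Complex.conj_eq_iff_re.1 hpc
        have hqre : (((v 1 / (I * μ)).re : ℝ) : ℂ) = v 1 / (I * μ) := Complex.conj_eq_iff_re.1 hqc
        set ζ : ℂ := ((v 0 / μ).re : ℂ) + ((v 1 / (I * μ)).re : ℂ) * I with hζdef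
        have hζ : ζ ≠ 0 := by
          intro hc
          have hre : (v 0 / μ).re = 0 := by
            simpa [hζdef] using congrArg Complex.re hc
          have him : (v 1 / (I * μ)).re = 0 := by
            simpa [hζdef] using congrArg Complex.im hc
          apply hv
          have h0 : v 0 = 0 := by
            have hh := hpre
            rw [hre] at hh
            rcases div_eq_zero_iff.1 hh.symm with h | h
            · exact h
            · exact absurd h hμne
          have h1 : v 1 = 0 := by
            have hh := hqre
            rw [him] at hh
            rcases div_eq_zero_iff.1 hh.symm with h | h
            · exact h
            · exact absurd h hIμne
          rw [← vec_eta v, h0, h1]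
          exact vec_eq_zero_iff.2 ⟨rfl, rfl⟩
        have hrpos : 0 < ‖ζ‖ := norm_pos_iff.2 hζ
        have hrne : (‖ζ‖ : ℂ) ≠ 0 := by
          exact_mod_cast hrpos.ne'
        have hζre : ζ.re = (v 0 / μ).re := by simp [hζdef]
        have hζim : ζ.im = (v 1 / (I * μ)).re := by simp [hζdef]
        have hcos : Real.cos (Complex.arg ζ) = (v 0 / μ).re / ‖ζ‖ := by
          rw [Complex.cos_arg hζ, hζre]
        have hsin : Real.sin (Complex.arg ζ) = (v 1 / (I * μ)).re / ‖ζ‖ := by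
          rw [Complex.sin_arg, hζim]
        refine ⟨Complex.arg ζ, ?_⟩
        have hgoal : Quot.mk rel (Projectivization.mk ℂ v hv)
            = Quot.mk rel (Projectivization.mk ℂ (Gv (Complex.arg ζ)) (Gv_ne _)) := by
          rw [mkQ_eq]
          left
          refine span_eq_of_det hv (Gv_ne _) ?_
          have hGv1 : (Gv (Complex.arg ζ)) 1 = (Real.sin (Complex.arg ζ) : ℂ) * I := rfl
          have hGv0 : (Gv (Complex.arg ζ)) 0 = (Real.cos (Complex.arg ζ) : ℂ) := rfl
          rw [hGv1, hGv0, hcos, hsin]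
          have hv0 : v 0 = μ * ((v 0 / μ).re : ℂ) := by
            rw [hpre]
            field_simp
          have hv1 : v 1 = I * μ * ((v 1 / (I * μ)).re : ℂ) := by
            rw [hqre]
            field_simp
          rw [hv0, hv1]
          push_cast
          field_simp
          simp only [Complex.ofReal_re]
          ring
        exact hgoal
  -- assemble the equivalence
  let gfun : Circle ⊕ PUnit → {q : Quot rel // f q = q} :=
    Sum.elim
      (fun c => ⟨ACmap ((AddCircle.homeomorphCircle h2pi).symm c), hACfix _⟩)
      (fun _ => ⟨pt, hfixpt⟩)
  have hgbij : Function.Bijective gfun := by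
    constructor
    · rintro (c | u) (c' | u') h
      · have h' : ACmap ((AddCircle.homeomorphCircle h2pi).symm c)
            = ACmap ((AddCircle.homeomorphCircle h2pi).symm c') := congrArg Subtype.val h
        have := hACinj h'
        have := (AddCircle.homeomorphCircle h2pi).symm.injective this
        rw [this]
      · have h' : ACmap ((AddCircle.homeomorphCircle h2pi).symm c) = pt :=
          congrArg Subtype.val h
        exact absurd h' (hACpt _)
      · have h' : ACmap ((AddCircle.homeomorphCircle h2pi).symm c') = pt :=
          (congrArg Subtype.val h).symm
        exact absurd h' (hACpt _)
      · rfl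
    · rintro ⟨q, hq⟩
      rcases hsurj q hq with ⟨θ, rfl⟩ | rfl
      · refine ⟨Sum.inl ((AddCircle.homeomorphCircle h2pi) ((4 * θ : ℝ) : AddCircle (2 * Real.pi))), ?_⟩
        apply Subtype.ext
        show ACmap ((AddCircle.homeomorphCircle h2pi).symm
          ((AddCircle.homeomorphCircle h2pi) _)) = G θ
        rw [Homeomorph.symm_apply_apply, hACmk]
        norm_num
      · exact ⟨Sum.inr PUnit.unit, rfl⟩
  have hgcont : Continuous gfun := by
    apply Continuous.sumElim
    · exact (hACcont.comp (AddCircle.homeomorphCircle h2pi).symm.continuous).subtype_mk _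
    · exact continuous_const.subtype_mk _
  let e : (Circle ⊕ PUnit) ≃ {q : Quot rel // f q = q} := Equiv.ofBijective gfun hgbij
  exact ⟨(Continuous.homeoOfEquivCompactToT2 (f := e) hgcont).symm⟩
end Stmt12Aux
end
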